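/- arXiv:1109.2690 — 4 statements merged into one kernel-verified Lean document; each statement's English description precedes it below -/
import Mathlib

section
/- Let P be an antichain of consecutive patterns, and for k ≥ 2 let p_k denote the number of patterns of length k in P. Then the coefficient-wise inequality (1 − t + Σ_{k≥2} (p_k/k!) t^k) · g_P(t) ≥ 1 holds, where g_P(t) = Σ_{n≥0} (a^P_n/n!) t^n; explicitly, the constant term of the product equals 1 and, for every n ≥ 1, a^P_n + Σ_{k=2}^{n} binom(n,k) · p_k · a^P_{n−k} ≥ n · a^P_{n−1}. -/
/-- Standardization of a list of (distinct) natural numbers: entry `x` is replaced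
by the number of entries of the list that are smaller than `x`.  For a list with
distinct entries this is the unique order-isomorphic permutation of `{0,…,n-1}`. -/
def std (l : List ℕ) : List ℕ := l.map (fun x => (l.filter (· < x)).length)

/-- `l` is (the list of values of) a permutation of `{0,…,n-1}` where `n = l.length`. -/
def IsPermList (l : List ℕ) : Prop := l.Perm (List.range l.length)

/-- The pattern `τ` occurs in `σ` as a consecutive pattern at (0-indexed) position `i`:
the factor of `σ` of length `τ.length` starting at position `i` is order-isomorphic to `τ`. -/
def OccursAt (τ σ : List ℕ) (i : ℕ) : Prop :=
  i + τ.length ≤ σ.length ∧ std ((σ.drop i).take τ.length) = τ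

/-- `τ` occurs somewhere in `σ` as a consecutive pattern. -/
def Occurs (τ σ : List ℕ) : Prop := ∃ i, OccursAt τ σ i

/-- `σ` avoids every pattern of the set `P`. -/
def AvoidsAll (P : Set (List ℕ)) (σ : List ℕ) : Prop := ∀ τ ∈ P, ¬ Occurs τ σ

/-- The number of permutations of length `n` avoiding all the patterns of `P`
as consecutive patterns. -/
noncomputable def avoidCount (P : Set (List ℕ)) (n : ℕ) : ℕ :=
  Nat.card {σ : List ℕ // σ.length = n ∧ IsPermList σ ∧ AvoidsAll P σ}

/-- `P` is an antichain of consecutive patterns: every element is a permutation of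
length at least 2, and no pattern of `P` occurs in a different pattern of `P`. -/
def PatternAntichain (P : Set (List ℕ)) : Prop :=
  (∀ τ ∈ P, IsPermList τ ∧ 2 ≤ τ.length) ∧
    ∀ τ₁ ∈ P, ∀ τ₂ ∈ P, τ₁ ≠ τ₂ → ¬ Occurs τ₁ τ₂

/-- `IsChainT P q σ t`: the permutation (list) `σ` is a `q`-chain with respect to the
set of forbidden patterns `P`, with tail the terminal segment of `σ` of length `t`.
The empty permutation is the unique 0-chain (its own tail), the one-element
permutation is the unique 1-chain (its own tail), and a `(q+1)`-chain is a
concatenation `σ' ++ τ` (with `τ` nonempty) such that the standardization of `σ'` is a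
`q`-chain with tail `τ'` (its last `t'` entries), and the standardization of `τ' ++ τ`
contains exactly one occurrence of a pattern from `P`, this occurrence being a
terminal segment; the tail of the `(q+1)`-chain is `τ`. -/
inductive IsChainT (P : Set (List ℕ)) : ℕ → List ℕ → ℕ → Prop
  | zero : IsChainT P 0 [] 0
  | one : IsChainT P 1 [0] 1
  | succ (q : ℕ) (σ' τ : List ℕ) (t' : ℕ)
      (hτ : τ ≠ [])
      (hperm : IsPermList (σ' ++ τ))
      (hchain : IsChainT P q (std σ') t')
      (huniq : ∃! x : ℕ × List ℕ,
        x.2 ∈ P ∧ OccursAt x.2 (std (σ'.drop (σ'.length - t') ++ τ)) x.1)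
      (hterm : ∀ i : ℕ, ∀ ρ ∈ P,
        OccursAt ρ (std (σ'.drop (σ'.length - t') ++ τ)) i → i + ρ.length = t' + τ.length) :
      IsChainT P (q + 1) (σ' ++ τ) τ.length

/-- `σ` is a `q`-chain with respect to `P` (for some tail). -/
def IsPatChain (P : Set (List ℕ)) (q : ℕ) (σ : List ℕ) : Prop := ∃ t, IsChainT P q σ t

/-- `chainCount P n q` is the number of `q`-chains of length `n` with respect to `P`. -/
noncomputable def chainCount (P : Set (List ℕ)) (n q : ℕ) : ℕ :=
  Nat.card {σ : List ℕ // σ.length = n ∧ IsPatChain P q σ}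

/-- The number of `q`-chains of length `n` whose first entry is `p`
(entries counted `1,…,n`, while lists are `0`-indexed permutations of `{0,…,n-1}`). -/
noncomputable def chainCountFst (P : Set (List ℕ)) (n q p : ℕ) : ℕ :=
  Nat.card {σ : List ℕ // σ.length = n ∧ IsPatChain P q σ ∧ σ.getD 0 0 + 1 = p}

/-- The number of `q`-chains of length `n` whose first entry is `p` and second entry is `r`
(entries counted `1,…,n`). -/
noncomputable def chainCountFstSnd (P : Set (List ℕ)) (n q p r : ℕ) : ℕ :=
  Nat.card {σ : List ℕ //
    σ.length = n ∧ IsPatChain P q σ ∧ σ.getD 0 0 + 1 = p ∧ σ.getD 1 0 + 1 = r}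

/-- A pattern `τ` has no self-overlaps if every permutation of length at most
`2 * τ.length - 2` contains at most one occurrence of `τ`. -/
def NonSelfOverlapping (τ : List ℕ) : Prop :=
  ∀ σ : List ℕ, IsPermList σ → σ.length ≤ 2 * τ.length - 2 →
    ∀ i j : ℕ, OccursAt τ σ i → OccursAt τ σ j → i = j

/-- The number of occurrences of `τ` in `σ` as a consecutive pattern. -/
noncomputable def occCount (τ σ : List ℕ) : ℕ := Nat.card {i : ℕ // OccursAt τ σ i}

/-- The `k`-fold ordered sum `λ (λ+m) (λ+2m) … (λ+(k-1)m)` of a pattern `λ` of length `m`. -/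
def ordSum (k m : ℕ) (l : List ℕ) : List ℕ :=
  ((List.range k).map (fun j => l.map (fun x => x + j * m))).flatten

/-- The length of the maximal initial segment of `l` that is an increasing run. -/
noncomputable def initRise (l : List ℕ) : ℕ :=
  sSup {j | j ≤ l.length ∧ List.Pairwise (· < ·) (l.take j)}

/-- The length of the maximal terminal segment of `l` that is an increasing run. -/
noncomputable def termRise (l : List ℕ) : ℕ :=
  sSup {j | j ≤ l.length ∧ List.Pairwise (· < ·) (l.drop (l.length - j))}

namespace GS
open List

lemma std_length (l : List ℕ) : (std l).length = l.length := by simp [std]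

lemma std_getElem (l : List ℕ) (i : ℕ) (h : i < (std l).length) :
    (std l)[i] = l.countP (fun y => decide (y < l[i]'(by simpa [std_length] using h))) := by
  simp [std, List.countP_eq_length_filter]

lemma countP_lt_countP {l : List ℕ} {a b : ℕ} (hab : a < b) (ha : a ∈ l) :
    l.countP (fun x => decide (x < a)) < l.countP (fun x => decide (x < b)) := by
  induction l with
  | nil => simp at ha
  | cons c t ih =>
    rw [List.countP_cons, List.countP_cons]
    have h1 : t.countP (fun x => decide (x < a)) ≤ t.countP (fun x => decide (x < b)) :=
      List.countP_mono_left (fun x _ hx => by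
        simp only [decide_eq_true_eq] at *; omega)
    rcases List.mem_cons.mp ha with rfl | ha'
    · simp [hab]; omega
    · have := ih ha'
      by_cases hca : c < a <;> by_cases hcb : c < b <;> simp [hca, hcb] <;> omega

lemma eq_of_countP_eq {l : List ℕ} {a b : ℕ} (ha : a ∈ l) (hb : b ∈ l)
    (h : l.countP (fun x => decide (x < a)) = l.countP (fun x => decide (x < b))) : a = b := by
  rcases lt_trichotomy a b with hab | hab | hab
  · exact absurd h (Nat.ne_of_lt (countP_lt_countP hab ha))
  · exact hab
  · exact absurd h.symm (Nat.ne_of_lt (countP_lt_countP hab hb))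

lemma std_lt_iff (l : List ℕ) {i j : ℕ} (hi : i < l.length) (hj : j < l.length) :
    (std l)[i]'(by simpa [std_length]) < (std l)[j]'(by simpa [std_length]) ↔ l[i] < l[j] := by
  rw [std_getElem, std_getElem]
  constructor
  · intro h
    rcases lt_trichotomy l[i] l[j] with hab | hab | hab
    · exact hab
    · simp [hab] at h
    · exact absurd (countP_lt_countP hab (l.getElem_mem hj)) (by omega)
  · intro h
    exact countP_lt_countP h (l.getElem_mem hi)

lemma countP_getElem_eq {l l' : List ℕ} (p q : ℕ → Bool) (hlen : l.length = l'.length)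
    (h : ∀ i : ℕ, (hi : i < l.length) → p l[i] = q (l'[i]'(hlen ▸ hi))) :
    l.countP p = l'.countP q := by
  induction l generalizing l' with
  | nil => cases l' with
    | nil => simp
    | cons c t => simp at hlen
  | cons c t ih =>
    cases l' with
    | nil => simp at hlen
    | cons c' t' =>
      rw [List.countP_cons, List.countP_cons]
      have h0 : p c = q c' := h 0 (by simp)
      have ht : t.countP p = t'.countP q := by
        apply ih (by simpa using hlen)
        intro i hi
        exact h (i + 1) (by simpa using hi)
      rw [h0, ht]

lemma std_congr {l l' : List ℕ} (hlen : l.length = l'.length)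
    (h : ∀ i j : ℕ, (hi : i < l.length) → (hj : j < l.length) →
      (l[i] < l[j] ↔ l'[i]'(hlen ▸ hi) < l'[j]'(hlen ▸ hj))) : std l = std l' := by
  apply List.ext_getElem (by simp [std_length, hlen])
  intro i h1 h2
  have hi : i < l.length := by simpa [std_length] using h1
  rw [std_getElem, std_getElem]
  apply countP_getElem_eq _ _ hlen
  intro j hj
  have := h j i hj hi
  simp only [decide_eq_decide]
  exact this


-- facts about IsPermList
lemma IsPermList.nodup {l : List ℕ} (h : IsPermList l) : l.Nodup :=
  h.nodup_iff.mpr List.nodup_range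

lemma IsPermList.lt_length {l : List ℕ} (h : IsPermList l) {x : ℕ} (hx : x ∈ l) :
    x < l.length := by
  have := h.mem_iff.mp hx
  simpa using this

lemma isPermList_of (l : List ℕ) (hnd : l.Nodup) (hlt : ∀ x ∈ l, x < l.length) :
    IsPermList l := by
  rw [IsPermList, List.perm_ext_iff_of_nodup hnd List.nodup_range]
  have hsub : l.toFinset ⊆ Finset.range l.length := by
    intro x hx
    rw [Finset.mem_range]
    exact hlt x (List.mem_toFinset.mp hx)
  have hcard : (Finset.range l.length).card ≤ l.toFinset.card := by
    rw [Finset.card_range, List.toFinset_card_of_nodup hnd]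
  have heq := Finset.eq_of_subset_of_card_le hsub hcard
  intro a
  rw [List.mem_range, ← Finset.mem_range, ← heq, List.mem_toFinset]

lemma countP_lt_range (x n : ℕ) :
    (List.range n).countP (fun y => decide (y < x)) = min x n := by
  induction n with
  | zero => simp
  | succ n ih =>
    rw [List.range_succ, List.countP_append, ih]
    by_cases h : n < x <;> simp [h] <;> omega

lemma std_of_perm {l : List ℕ} (h : IsPermList l) : std l = l := by
  apply List.ext_getElem (std_length l)
  intro i h1 h2
  rw [std_getElem]
  rw [h.countP_eq, countP_lt_range]
  have : l[i] < l.length := IsPermList.lt_length h (l.getElem_mem h2)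
  omega

lemma std_isPermList {l : List ℕ} (hnd : l.Nodup) : IsPermList (std l) := by
  apply isPermList_of
  · rw [std]
    apply List.Nodup.map_on _ hnd
    intro x hx y hy hxy
    simp only [← List.countP_eq_length_filter] at hxy
    exact eq_of_countP_eq hx hy (by simpa using hxy)
  · intro x hx
    rw [std_length]
    rw [std, List.mem_map] at hx
    obtain ⟨a, ha, rfl⟩ := hx
    rw [← List.countP_eq_length_filter]
    rcases Nat.lt_or_ge (l.countP (fun y => decide (y < a))) l.length with h | h
    · simpa using h
    · exfalso
      have := List.countP_eq_length.mp (le_antisymm List.countP_le_length h) a ha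
      simp at this

lemma std_factor (l : List ℕ) (i k : ℕ) :
    std (((std l).drop i).take k) = std ((l.drop i).take k) := by
  have hlen : (((std l).drop i).take k).length = ((l.drop i).take k).length := by
    simp [std_length]
  apply std_congr hlen
  intro a b ha hb
  have hl : (((std l).drop i).take k).length = min k ((std l).length - i) := by simp
  have ha' : i + a < l.length := by
    rw [hl, std_length] at ha; omega
  have hb' : i + b < l.length := by
    rw [hl, std_length] at hb; omega
  rw [List.getElem_take, List.getElem_drop, List.getElem_take, List.getElem_drop,
    List.getElem_take, List.getElem_drop, List.getElem_take, List.getElem_drop]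
  exact std_lt_iff l ha' hb'

lemma occursAt_std_iff (τ l : List ℕ) (i : ℕ) :
    OccursAt τ (std l) i ↔ OccursAt τ l i := by
  unfold OccursAt
  rw [std_length, std_factor]

lemma occursAt_take_iff (τ l : List ℕ) (i m : ℕ) (him : i + τ.length ≤ m)
    (hm : m ≤ l.length) : OccursAt τ (l.take m) i ↔ OccursAt τ l i := by
  unfold OccursAt
  have hfac : ((l.take m).drop i).take τ.length = (l.drop i).take τ.length := by
    rw [List.drop_take, List.take_take]
    congr 1
    omega
  rw [hfac, List.length_take]
  constructor
  · rintro ⟨h1, h2⟩; exact ⟨by omega, h2⟩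
  · rintro ⟨h1, h2⟩; exact ⟨by omega, h2⟩

lemma avoidsAll_std_take {P : Set (List ℕ)} {l : List ℕ} (h : AvoidsAll P l) (m : ℕ)
    (hm : m ≤ l.length) : AvoidsAll P (std (l.take m)) := by
  intro τ hτ ⟨i, hocc⟩
  rw [occursAt_std_iff] at hocc
  have h1 : i + τ.length ≤ m := by
    have h2 := hocc.1
    rw [List.length_take] at h2
    omega
  exact h τ hτ ⟨i, (occursAt_take_iff τ l i m h1 hm).mp hocc⟩


-- list recovered from its standardization and value set
lemma eq_of_std_eq {l l' : List ℕ} (hnd : l.Nodup) (hnd' : l'.Nodup)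
    (hfs : l.toFinset = l'.toFinset) (hstd : std l = std l') : l = l' := by
  have hperm : l.Perm l' := by
    rw [List.perm_ext_iff_of_nodup hnd hnd']
    intro a
    rw [← List.mem_toFinset, ← List.mem_toFinset, hfs]
  have hlen : l.length = l'.length := hperm.length_eq
  apply List.ext_getElem hlen
  intro i h1 h2
  have e1 : (std l)[i]'(by simpa [std_length]) = (std l')[i]'(by simpa [std_length]) := by
    simp only [hstd]
  rw [std_getElem, std_getElem] at e1
  rw [← hperm.countP_eq] at e1
  exact eq_of_countP_eq (l.getElem_mem h1) (hperm.mem_iff.mpr (l'.getElem_mem h2)) e1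

lemma std_map_mono (l : List ℕ) (f : ℕ → ℕ) (hf : ∀ x y : ℕ, x < y ↔ f x < f y) :
    std (l.map f) = std l := by
  apply std_congr (by simp)
  intro i j hi hj
  rw [List.getElem_map, List.getElem_map]
  exact (hf _ _).symm

-- finiteness
lemma finite_aux (n : ℕ) (Q : List ℕ → Prop)
    (hQ : ∀ σ, Q σ → σ.length = n ∧ IsPermList σ) : Finite {σ : List ℕ // Q σ} := by
  have : ∀ σ : {σ : List ℕ // Q σ}, σ.1 ∈ (List.range n).permutations.toFinset := by
    intro ⟨σ, hσ⟩
    rw [List.mem_toFinset, List.mem_permutations]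
    obtain ⟨h1, h2⟩ := hQ σ hσ
    rw [← h1]; exact h2
  apply Finite.of_injective
    (fun σ => (⟨σ.1, this σ⟩ : {l // l ∈ (List.range n).permutations.toFinset}))
  intro a b h
  rw [Subtype.mk.injEq] at h
  exact Subtype.ext h


-- the extension map
def ext1 (v : ℕ) (π : List ℕ) : List ℕ := π.map (fun x => if x < v then x else x + 1) ++ [v]

lemma shift_mono (v : ℕ) : ∀ x y : ℕ, x < y ↔ (if x < v then x else x + 1) < (if y < v then y else y + 1) := by
  intro x y
  split_ifs <;> omega

lemma ext1_length (v : ℕ) (π : List ℕ) : (ext1 v π).length = π.length + 1 := by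
  simp [ext1]

lemma ext1_take (v : ℕ) (π : List ℕ) :
    (ext1 v π).take π.length = π.map (fun x => if x < v then x else x + 1) := by
  rw [ext1, ← List.length_map (as := π) (fun x => if x < v then x else x + 1), List.take_left]

lemma ext1_perm {n v : ℕ} {π : List ℕ} (hv : v < n) (hπ : IsPermList π)
    (hlen : π.length = n - 1) (hn : 1 ≤ n) : IsPermList (ext1 v π) := by
  apply isPermList_of
  · rw [ext1, List.nodup_append']
    refine ⟨?_, List.nodup_singleton v, ?_⟩
    · apply List.Nodup.map_on _ (IsPermList.nodup hπ)
      intro x _ y _ hxy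
      have := shift_mono v x y
      have := shift_mono v y x
      omega
    · intro x hx hx2
      simp only [List.mem_singleton] at hx2
      subst hx2
      rw [List.mem_map] at hx
      obtain ⟨y, _, hy⟩ := hx
      split_ifs at hy <;> omega
  · intro x hx
    rw [ext1_length, hlen]
    rw [ext1, List.mem_append] at hx
    rcases hx with hx | hx
    · rw [List.mem_map] at hx
      obtain ⟨y, hy, rfl⟩ := hx
      have := IsPermList.lt_length hπ hy
      rw [hlen] at this
      split_ifs <;> omega
    · simp only [List.mem_singleton] at hx
      omega

lemma ext1_std_take {v : ℕ} {π : List ℕ} (hπ : IsPermList π) :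
    std ((ext1 v π).take π.length) = π := by
  rw [ext1_take, std_map_mono _ _ (shift_mono v), std_of_perm hπ]

-- the set S and its cardinality lower bound
lemma card_S_ge (P : Set (List ℕ)) (n : ℕ) (hn : 1 ≤ n) :
    n * avoidCount P (n - 1) ≤
      Nat.card {σ : List ℕ // σ.length = n ∧ IsPermList σ ∧
        AvoidsAll P (std (σ.take (n - 1)))} := by
  haveI : Finite {σ : List ℕ // σ.length = n ∧ IsPermList σ ∧
      AvoidsAll P (std (σ.take (n - 1)))} :=
    finite_aux n _ (fun σ h => ⟨h.1, h.2.1⟩)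
  have key : ∀ x : Fin n × {σ : List ℕ // σ.length = n - 1 ∧ IsPermList σ ∧ AvoidsAll P σ},
      (ext1 x.1.1 x.2.1).length = n ∧ IsPermList (ext1 x.1.1 x.2.1) ∧
        AvoidsAll P (std ((ext1 x.1.1 x.2.1).take (n - 1))) := by
    rintro ⟨v, π, hπlen, hπperm, hπav⟩
    refine ⟨?_, ?_, ?_⟩
    · show (ext1 v.1 π).length = n
      rw [ext1_length, hπlen]; omega
    · exact ext1_perm v.2 hπperm hπlen hn
    · show AvoidsAll P (std ((ext1 v.1 π).take (n - 1)))
      rw [← hπlen, ext1_std_take hπperm]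
      exact hπav
  have hinj : Function.Injective
      (fun x : Fin n × {σ : List ℕ // σ.length = n - 1 ∧ IsPermList σ ∧ AvoidsAll P σ} =>
        (⟨ext1 x.1.1 x.2.1, key x⟩ : {σ : List ℕ // σ.length = n ∧ IsPermList σ ∧
          AvoidsAll P (std (σ.take (n - 1)))})) := by
    rintro ⟨v, π, hπ⟩ ⟨w, ρ, hρ⟩ h
    rw [Subtype.mk.injEq] at h
    simp only at h
    rw [ext1, ext1] at h
    have hlenmap : (π.map (fun x => if x < v.1 then x else x + 1)).length =
        (ρ.map (fun x => if x < w.1 then x else x + 1)).length := by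
      simp [hπ.1, hρ.1]
    obtain ⟨h1, h2⟩ := List.append_inj h hlenmap
    have hvw : v = w := by
      apply Fin.ext
      simpa using h2
    have hπρ : π = ρ := by
      have e1 : std (π.map (fun x => if x < v.1 then x else x + 1)) = π := by
        rw [std_map_mono _ _ (shift_mono v.1), std_of_perm hπ.2.1]
      have e2 : std (ρ.map (fun x => if x < w.1 then x else x + 1)) = ρ := by
        rw [std_map_mono _ _ (shift_mono w.1), std_of_perm hρ.2.1]
      rw [← e1, ← e2, h1]
    simp [hvw, hπρ]
  calc n * avoidCount P (n - 1)
      = Nat.card (Fin n × {σ : List ℕ // σ.length = n - 1 ∧ IsPermList σ ∧ AvoidsAll P σ}) := by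
        rw [Nat.card_prod, Nat.card_eq_fintype_card, Fintype.card_fin, avoidCount]
    _ ≤ _ := Nat.card_le_card_of_injective _ hinj

lemma avoidsAll_std_take_of_take {P : Set (List ℕ)} {l : List ℕ} {m m' : ℕ}
    (h : AvoidsAll P (std (l.take m'))) (hmm : m ≤ m') (hm' : m' ≤ l.length) :
    AvoidsAll P (std (l.take m)) := by
  intro τ hτ hocc
  obtain ⟨i, hocc⟩ := hocc
  rw [occursAt_std_iff] at hocc
  have hb : i + τ.length ≤ m := by
    have := hocc.1
    rw [List.length_take] at this
    omega
  have h1 : OccursAt τ l i := (occursAt_take_iff τ l i m hb (by omega)).mp hocc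
  have h2 : OccursAt τ (l.take m') i := (occursAt_take_iff τ l i m' (by omega) hm').mpr h1
  exact h τ hτ ⟨i, (occursAt_std_iff _ _ _).mpr h2⟩

lemma toFinset_take_eq {l : List ℕ} (hperm : IsPermList l) (m : ℕ) :
    (l.take m).toFinset = Finset.range l.length \ (l.drop m).toFinset := by
  have hnd := IsPermList.nodup hperm
  have hsplit : l.take m ++ l.drop m = l := List.take_append_drop m l
  have hfull : l.toFinset = Finset.range l.length := by
    ext a
    simp [hperm.mem_iff]
  have hdisj : ∀ a : ℕ, a ∈ (l.take m).toFinset → a ∉ (l.drop m).toFinset := by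
    intro a ha hb
    rw [List.mem_toFinset] at ha hb
    have hnd' : (l.take m ++ l.drop m).Nodup := by rw [hsplit]; exact hnd
    exact (List.nodup_append'.mp hnd').2.2 ha hb
  ext a
  rw [Finset.mem_sdiff, ← hfull]
  constructor
  · intro ha
    refine ⟨?_, hdisj a ha⟩
    rw [List.mem_toFinset] at ha ⊢
    exact (List.take_sublist m l).subset ha
  · rintro ⟨ha, hb⟩
    rw [List.mem_toFinset] at ha hb ⊢
    rw [← hsplit, List.mem_append] at ha
    rcases ha with h | h
    · exact h
    · exact absurd h hb

section Main
variable (P : Set (List ℕ))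

lemma card_split (n : ℕ) :
    Nat.card {σ : List ℕ // σ.length = n ∧ IsPermList σ ∧
        AvoidsAll P (std (σ.take (n - 1)))} ≤
      avoidCount P n +
        Nat.card {σ : List ℕ // σ.length = n ∧ IsPermList σ ∧
          AvoidsAll P (std (σ.take (n - 1))) ∧ ¬ AvoidsAll P σ} := by
  classical
  haveI : Finite {σ : List ℕ // σ.length = n ∧ IsPermList σ ∧ AvoidsAll P σ} :=
    finite_aux n _ (fun σ h => ⟨h.1, h.2.1⟩)
  haveI : Finite {σ : List ℕ // σ.length = n ∧ IsPermList σ ∧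
      AvoidsAll P (std (σ.take (n - 1))) ∧ ¬ AvoidsAll P σ} :=
    finite_aux n _ (fun σ h => ⟨h.1, h.2.1⟩)
  rw [avoidCount, ← Nat.card_sum]
  apply Nat.card_le_card_of_injective
    (fun σ : {σ : List ℕ // σ.length = n ∧ IsPermList σ ∧
        AvoidsAll P (std (σ.take (n - 1)))} =>
      if hav : AvoidsAll P σ.1 then Sum.inl ⟨σ.1, σ.2.1, σ.2.2.1, hav⟩
      else Sum.inr ⟨σ.1, σ.2.1, σ.2.2.1, σ.2.2.2, hav⟩)
  intro x y hxy
  apply Subtype.ext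
  simp only [] at hxy
  by_cases h1 : AvoidsAll P x.1 <;> by_cases h2 : AvoidsAll P y.1
  · rw [dif_pos h1, dif_pos h2] at hxy
    have h3 := Sum.inl.inj hxy
    rw [Subtype.mk.injEq] at h3
    exact h3
  · rw [dif_pos h1, dif_neg h2] at hxy
    exact absurd hxy (by simp)
  · rw [dif_neg h1, dif_pos h2] at hxy
    exact absurd hxy (by simp)
  · rw [dif_neg h1, dif_neg h2] at hxy
    have h3 := Sum.inr.inj hxy
    rw [Subtype.mk.injEq] at h3
    exact h3

lemma card_bad_le (hP : PatternAntichain P)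
    (hfin : ∀ k : ℕ, {τ : List ℕ | τ ∈ P ∧ τ.length = k}.Finite) (n : ℕ) (hn : 1 ≤ n) :
    Nat.card {σ : List ℕ // σ.length = n ∧ IsPermList σ ∧
        AvoidsAll P (std (σ.take (n - 1))) ∧ ¬ AvoidsAll P σ} ≤
      ∑ k ∈ Finset.Icc 2 n,
        n.choose k * Nat.card {τ : List ℕ // τ ∈ P ∧ τ.length = k} * avoidCount P (n - k) := by
  classical
  set Sb := {σ : List ℕ // σ.length = n ∧ IsPermList σ ∧
    AvoidsAll P (std (σ.take (n - 1))) ∧ ¬ AvoidsAll P σ} with hSb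
  -- key decomposition
  have key : ∀ σ : Sb, ∃ τ : List ℕ, τ ∈ P ∧ 2 ≤ τ.length ∧ τ.length ≤ n ∧
      std (σ.1.drop (n - τ.length)) = τ := by
    intro σ0
    obtain ⟨hlen, hperm, hpre, hbad⟩ := σ0.2
    set σ := σ0.1 with hσ
    simp only [AvoidsAll, not_forall] at hbad
    obtain ⟨τ, hτP, hocc⟩ := hbad
    rw [not_not] at hocc
    obtain ⟨i, hi⟩ := hocc
    have hτ2 : 2 ≤ τ.length := (hP.1 τ hτP).2
    have hik : i + τ.length ≤ n := by
      have := hi.1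
      omega
    have hend : i + τ.length = n := by
      by_contra hne
      have h1 : i + τ.length ≤ n - 1 := by omega
      have h2 : OccursAt τ (σ.take (n - 1)) i :=
        (occursAt_take_iff τ σ i (n - 1) h1 (by omega)).mpr hi
      exact hpre τ hτP ⟨i, (occursAt_std_iff _ _ _).mpr h2⟩
    refine ⟨τ, hτP, hτ2, by omega, ?_⟩
    have hdroplen : (σ.drop (n - τ.length)).length = τ.length := by
      rw [List.length_drop, hlen]
      omega
    have htake : (σ.drop (n - τ.length)).take τ.length = σ.drop (n - τ.length) :=
      List.take_of_length_le (le_of_eq hdroplen)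
    have := hi.2
    rw [show i = n - τ.length by omega, htake] at this
    exact this
  choose τf hτfP hτf2 hτfn hτfstd using key
  -- components
  have hA : ∀ σ : Sb, (std (σ.1.take (n - (τf σ).length))).length = n - (τf σ).length ∧
      IsPermList (std (σ.1.take (n - (τf σ).length))) ∧
      AvoidsAll P (std (σ.1.take (n - (τf σ).length))) := by
    intro σ0
    obtain ⟨hlen, hperm, hpre, hbad⟩ := σ0.2
    have h2 := hτf2 σ0
    have h3 := hτfn σ0
    refine ⟨?_, ?_, ?_⟩
    · rw [std_length, List.length_take, hlen]
      omega
    · exact std_isPermList ((IsPermList.nodup hperm).sublist (List.take_sublist _ _))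
    · exact avoidsAll_std_take_of_take hpre
        (by omega : n - (τf σ0).length ≤ n - 1) (by omega)
  have hS : ∀ σ : Sb, (σ.1.drop (n - (τf σ).length)).toFinset ⊆ Finset.range n ∧
      (σ.1.drop (n - (τf σ).length)).toFinset.card = (τf σ).length := by
    intro σ0
    obtain ⟨hlen, hperm, hpre, hbad⟩ := σ0.2
    have h3 := hτfn σ0
    constructor
    · intro x hx
      rw [List.mem_toFinset] at hx
      rw [Finset.mem_range, ← hlen]
      exact IsPermList.lt_length hperm ((List.drop_sublist _ _).mem hx)
    · rw [List.toFinset_card_of_nodup ((IsPermList.nodup hperm).sublist (List.drop_sublist _ _)),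
        List.length_drop, hlen]
      omega
  -- the target type
  set T := (k : ↥(Finset.Icc 2 n)) ×
      ({s : Finset ℕ // s ⊆ Finset.range n ∧ s.card = (k : ℕ)} ×
       {τ : List ℕ // τ ∈ P ∧ τ.length = (k : ℕ)} ×
       {σ : List ℕ // σ.length = n - (k : ℕ) ∧ IsPermList σ ∧ AvoidsAll P σ}) with hT
  have eS : ∀ k : ℕ, {s : Finset ℕ // s ⊆ Finset.range n ∧ s.card = k} ≃
      {s : Finset ℕ // s ∈ (Finset.range n).powersetCard k} :=
    fun k => Equiv.subtypeEquivRight (fun s => Finset.mem_powersetCard.symm)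
  haveI iS : ∀ k : ℕ, Finite {s : Finset ℕ // s ⊆ Finset.range n ∧ s.card = k} :=
    fun k => Finite.of_equiv _ (eS k).symm
  haveI iP : ∀ k : ℕ, Finite {τ : List ℕ // τ ∈ P ∧ τ.length = k} :=
    fun k => (hfin k).to_subtype
  haveI iA : ∀ m : ℕ, Finite {σ : List ℕ // σ.length = m ∧ IsPermList σ ∧ AvoidsAll P σ} :=
    fun m => finite_aux m _ (fun σ h => ⟨h.1, h.2.1⟩)
  -- the injection
  have hinj : Function.Injective (fun σ : Sb =>
      (⟨⟨(τf σ).length, Finset.mem_Icc.mpr ⟨hτf2 σ, hτfn σ⟩⟩,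
        ⟨(σ.1.drop (n - (τf σ).length)).toFinset, hS σ⟩,
        ⟨τf σ, hτfP σ, rfl⟩,
        ⟨std (σ.1.take (n - (τf σ).length)), hA σ⟩⟩ : T)) := by
    intro a b heq
    have ek : (τf a).length = (τf b).length := by
      have := congrArg (fun x : T => (x.1 : ℕ)) heq
      simpa using this
    have es : (a.1.drop (n - (τf a).length)).toFinset =
        (b.1.drop (n - (τf b).length)).toFinset := by
      have := congrArg (fun x : T => x.2.1.1) heq
      simpa using this
    have eπ : std (a.1.take (n - (τf a).length)) = std (b.1.take (n - (τf b).length)) := by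
      have := congrArg (fun x : T => x.2.2.2.1) heq
      simpa using this
    have eτ : τf a = τf b := by
      have := congrArg (fun x : T => x.2.2.1.1) heq
      simpa using this
    rw [← ek] at es eπ
    have hnda := IsPermList.nodup a.2.2.1
    have hndb := IsPermList.nodup b.2.2.1
    have hb' : std (b.1.drop (n - (τf a).length)) = τf a := by
      rw [ek, hτfstd b]
      exact eτ.symm
    -- suffixes are equal
    have hsuf : a.1.drop (n - (τf a).length) = b.1.drop (n - (τf a).length) := by
      apply eq_of_std_eq (hnda.sublist (List.drop_sublist _ _))
        (hndb.sublist (List.drop_sublist _ _)) es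
      rw [hτfstd a, hb']
    -- prefixes are equal
    have hpre : a.1.take (n - (τf a).length) = b.1.take (n - (τf a).length) := by
      apply eq_of_std_eq (hnda.sublist (List.take_sublist _ _))
        (hndb.sublist (List.take_sublist _ _)) _ eπ
      rw [toFinset_take_eq a.2.2.1, toFinset_take_eq b.2.2.1, a.2.1, b.2.1, es]
    apply Subtype.ext
    rw [← List.take_append_drop (n - (τf a).length) a.1,
      ← List.take_append_drop (n - (τf a).length) b.1, hsuf, hpre]
  haveI : Finite T := by
    rw [hT]
    infer_instance
  calc Nat.card Sb ≤ Nat.card T := Nat.card_le_card_of_injective _ hinj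
    _ = ∑ k ∈ Finset.Icc 2 n,
        n.choose k * Nat.card {τ : List ℕ // τ ∈ P ∧ τ.length = k} * avoidCount P (n - k) := by
      letI iS' : ∀ k : ℕ, Fintype {s : Finset ℕ // s ⊆ Finset.range n ∧ s.card = k} :=
        fun k => Fintype.ofFinite _
      letI iP' : ∀ k : ℕ, Fintype {τ : List ℕ // τ ∈ P ∧ τ.length = k} :=
        fun k => Fintype.ofFinite _
      letI iA' : ∀ m : ℕ, Fintype {σ : List ℕ // σ.length = m ∧ IsPermList σ ∧ AvoidsAll P σ} :=
        fun m => Fintype.ofFinite _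
      rw [hT, Nat.card_eq_fintype_card, Fintype.card_sigma,
        ← Finset.sum_coe_sort (Finset.Icc 2 n)
          (fun k => n.choose k * Nat.card {τ : List ℕ // τ ∈ P ∧ τ.length = k} *
            avoidCount P (n - k))]
      apply Finset.sum_congr rfl
      intro i _
      rw [Fintype.card_prod, Fintype.card_prod]
      have c1 : Fintype.card {s : Finset ℕ // s ⊆ Finset.range n ∧ s.card = (i : ℕ)} =
          n.choose (i : ℕ) := by
        rw [Fintype.card_congr (eS (i : ℕ))]
        rw [Fintype.card_coe, Finset.card_powersetCard, Finset.card_range]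
      have c2 : Fintype.card {τ : List ℕ // τ ∈ P ∧ τ.length = (i : ℕ)} =
          Nat.card {τ : List ℕ // τ ∈ P ∧ τ.length = (i : ℕ)} :=
        (Nat.card_eq_fintype_card).symm
      have c3 : Fintype.card {σ : List ℕ // σ.length = n - (i : ℕ) ∧ IsPermList σ ∧
          AvoidsAll P σ} = avoidCount P (n - (i : ℕ)) := by
        rw [avoidCount, Nat.card_eq_fintype_card]
      rw [c1, c2, c3, mul_assoc]

end Main


end GS

/-- Golod–Shafarevich type inequality for consecutive pattern avoidance:
the constant term of `(1 - t + Σ_{k≥2} (p_k/k!) t^k) · g_P(t)` equals 1 and all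
other coefficients are nonnegative, i.e. for `n ≥ 1`,
`a^P_n + Σ_{k=2}^n C(n,k) p_k a^P_{n-k} ≥ n · a^P_{n-1}`. -/
theorem statement0 (P : Set (List ℕ)) (hP : PatternAntichain P)
    (hfin : ∀ k : ℕ, {τ : List ℕ | τ ∈ P ∧ τ.length = k}.Finite) :
    avoidCount P 0 = 1 ∧
      ∀ n : ℕ, 1 ≤ n →
        n * avoidCount P (n - 1) ≤
          avoidCount P n +
            ∑ k ∈ Finset.Icc 2 n,
              n.choose k * Nat.card {τ : List ℕ // τ ∈ P ∧ τ.length = k} *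
                avoidCount P (n - k) := by

  constructor
  · rw [avoidCount, Nat.card_eq_one_iff_unique]
    constructor
    · constructor
      intro a b
      apply Subtype.ext
      rw [List.length_eq_zero_iff.mp a.2.1, List.length_eq_zero_iff.mp b.2.1]
    · refine ⟨⟨[], rfl, ?_, ?_⟩⟩
      · show List.Perm [] (List.range [].length)
        simp
      · rintro τ hτ ⟨i, h1, h2⟩
        have h3 := (hP.1 τ hτ).2
        simp only [List.length_nil] at h1
        omega
  · intro n hn
    calc n * avoidCount P (n - 1)
        ≤ Nat.card {σ : List ℕ // σ.length = n ∧ IsPermList σ ∧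
            AvoidsAll P (std (σ.take (n - 1)))} := GS.card_S_ge P n hn
      _ ≤ avoidCount P n +
            Nat.card {σ : List ℕ // σ.length = n ∧ IsPermList σ ∧
              AvoidsAll P (std (σ.take (n - 1))) ∧ ¬ AvoidsAll P σ} := GS.card_split P n
      _ ≤ avoidCount P n +
            ∑ k ∈ Finset.Icc 2 n,
              n.choose k * Nat.card {τ : List ℕ // τ ∈ P ∧ τ.length = k} *
                avoidCount P (n - k) :=
          Nat.add_le_add_left (GS.card_bad_le P hP hfin n hn) _
end

section
/- Let P be an antichain of consecutive patterns, and for k ≥ 2 let p_k denote the number of patterns of length k in P. Suppose α > 0 is such that the series Σ_{k≥2} p_k α^k / k! converges and 1 − α + Σ_{k≥2} p_k α^k / k! = 0. Then for every n ≥ 0, the number of permutations of length n avoiding all patterns in P satisfies a^P_n ≥ α^{−n} · n!. -/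
section AuxStd

open List

private def cb (l : List ℕ) (x : ℕ) : ℕ := (l.filter (· < x)).length

private lemma std_eq_map (l : List ℕ) : std l = l.map (cb l) := rfl

private lemma std_length (l : List ℕ) : (std l).length = l.length := by
  simp [std]

private lemma cb_eq_countP (l : List ℕ) (x : ℕ) :
    cb l x = l.countP (fun y => decide (y < x)) := by
  simp [cb, List.countP_eq_length_filter]

private lemma cb_perm {l l' : List ℕ} (h : l.Perm l') (x : ℕ) : cb l x = cb l' x := by
  simp [cb_eq_countP, h.countP_eq]

private lemma countP_lt_range (n x : ℕ) :
    (List.range n).countP (fun y => decide (y < x)) = min x n := by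
  induction n with
  | zero => simp
  | succ n ih =>
    rw [List.range_succ, List.countP_append, ih]
    simp only [List.countP_cons, List.countP_nil]
    by_cases h : n < x <;> simp [h] <;> omega

private lemma mem_lt_of_isPermList {l : List ℕ} (h : IsPermList l) {x : ℕ} (hx : x ∈ l) :
    x < l.length := by
  have := h.mem_iff.mp hx
  simpa [List.mem_range] using this

private lemma nodup_of_isPermList {l : List ℕ} (h : IsPermList l) : l.Nodup :=
  h.symm.nodup List.nodup_range

private lemma std_of_isPermList {l : List ℕ} (h : IsPermList l) : std l = l := by
  rw [std_eq_map]
  conv_rhs => rw [← List.map_id l]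
  apply List.map_congr_left
  intro x hx
  have hxl : x < l.length := mem_lt_of_isPermList h hx
  rw [cb_perm h, cb_eq_countP, countP_lt_range]
  simp only [id]
  omega

private lemma countP_lt_countP {l : List ℕ} {p q : ℕ → Bool}
    (hpq : ∀ a ∈ l, p a → q a) {a : ℕ} (ha : a ∈ l) (hqa : q a = true) (hpa : p a = false) :
    l.countP p < l.countP q := by
  induction l with
  | nil => cases ha
  | cons b t ih =>
    rw [List.countP_cons, List.countP_cons]
    rcases List.mem_cons.mp ha with rfl | hat
    · have h1 : t.countP p ≤ t.countP q :=
        List.countP_mono_left (fun x hx => hpq x (List.mem_cons_of_mem _ hx))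
      simp only [hpa, hqa, Bool.false_eq_true, if_true, if_false]
      omega
    · have h1 := ih (fun x hx => hpq x (List.mem_cons_of_mem _ hx)) hat
      have h2 : (if p b = true then 1 else 0) ≤ (if q b = true then 1 else 0) := by
        by_cases hb : p b = true
        · simp [hb, hpq b List.mem_cons_self hb]
        · simp [hb]
      omega

private lemma cb_lt_cb {l : List ℕ} {x y : ℕ} (hx : x ∈ l) (hxy : x < y) :
    cb l x < cb l y := by
  rw [cb_eq_countP, cb_eq_countP]
  refine countP_lt_countP (fun a _ ha => ?_) hx (by simpa using hxy) (by simp)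
  simp only [decide_eq_true_eq] at ha ⊢
  omega

private lemma cb_lt_iff {l : List ℕ} {x y : ℕ} (hx : x ∈ l) (hy : y ∈ l) :
    cb l x < cb l y ↔ x < y := by
  constructor
  · intro h
    rcases lt_trichotomy x y with h' | h' | h'
    · exact h'
    · subst h'; omega
    · exact absurd (cb_lt_cb hy h') (by omega)
  · exact cb_lt_cb hx

private lemma std_map_of {l : List ℕ} {f : ℕ → ℕ}
    (hf : ∀ x ∈ l, ∀ y ∈ l, (f x < f y ↔ x < y)) : std (l.map f) = std l := by
  rw [std_eq_map, std_eq_map, List.map_map]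
  apply List.map_congr_left
  intro x hx
  show cb (l.map f) (f x) = cb l x
  rw [cb_eq_countP, cb_eq_countP, List.countP_map]
  apply List.countP_congr
  intro a ha
  simp only [Function.comp, decide_eq_true_eq]
  constructor
  · intro h; exact (hf a ha x hx).mp h
  · intro h; exact (hf a ha x hx).mpr h

private lemma factor_map (l : List ℕ) (f : ℕ → ℕ) (i k : ℕ) :
    ((l.map f).drop i).take k = (((l.drop i).take k).map f) := by
  simp

private lemma factor_mem {l : List ℕ} {i k : ℕ} {x : ℕ} (hx : x ∈ (l.drop i).take k) :
    x ∈ l :=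
  ((List.take_sublist _ _).trans (List.drop_sublist _ _)).subset hx

private lemma occursAt_map_iff {l : List ℕ} {f : ℕ → ℕ}
    (hf : ∀ x ∈ l, ∀ y ∈ l, (f x < f y ↔ x < y)) (τ : List ℕ) (i : ℕ) :
    OccursAt τ (l.map f) i ↔ OccursAt τ l i := by
  unfold OccursAt
  rw [List.length_map, factor_map,
    std_map_of (fun x hx y hy => hf x (factor_mem hx) y (factor_mem hy))]

private lemma occursAt_std_iff {σ τ : List ℕ} (i : ℕ) :
    OccursAt τ (std σ) i ↔ OccursAt τ σ i := by
  rw [std_eq_map]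
  exact occursAt_map_iff (fun x hx y hy => cb_lt_iff hx hy) τ i

private lemma perm_range_of {l : List ℕ} {n : ℕ} (hnd : l.Nodup)
    (hlt : ∀ x ∈ l, x < n) (hlen : l.length = n) : l.Perm (List.range n) := by
  have h1 : l.toFinset ⊆ Finset.range n := fun x hx =>
    Finset.mem_range.mpr (hlt x (List.mem_toFinset.mp hx))
  have h2 : l.toFinset = Finset.range n := by
    apply Finset.eq_of_subset_of_card_le h1
    rw [List.toFinset_card_of_nodup hnd, hlen, Finset.card_range]
  rw [List.perm_ext_iff_of_nodup hnd List.nodup_range]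
  intro a
  rw [← List.mem_toFinset, h2]
  simp

private lemma cb_lt_length {l : List ℕ} {x : ℕ} (hx : x ∈ l) : cb l x < l.length := by
  rw [cb_eq_countP]
  refine lt_of_le_of_ne List.countP_le_length ?_
  intro he
  have := List.countP_eq_length.mp he x hx
  simp at this

private lemma isPermList_std {l : List ℕ} (hl : l.Nodup) : IsPermList (std l) := by
  rw [IsPermList, std_length]
  rw [std_eq_map]
  apply perm_range_of
  · refine hl.map_on ?_
    intro x hx y hy hxy
    rcases lt_trichotomy x y with h | h | h
    · exact absurd hxy (Nat.ne_of_lt (cb_lt_cb hx h))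
    · exact h
    · exact absurd hxy.symm (Nat.ne_of_lt (cb_lt_cb hy h))
  · intro z hz
    rw [List.mem_map] at hz
    obtain ⟨x, hx, rfl⟩ := hz
    exact cb_lt_length hx
  · simp

private lemma sorted_getD {w : List ℕ} (hw : List.Pairwise (· < ·) w) {x : ℕ} (hx : x ∈ w) :
    w.getD (w.countP (fun y => decide (y < x))) 0 = x := by
  induction w with
  | nil => cases hx
  | cons a t ih =>
    rw [List.pairwise_cons] at hw
    rcases List.mem_cons.mp hx with rfl | hxt
    · have h0 : t.countP (fun y => decide (y < x)) = 0 := by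
        rw [List.countP_eq_zero]
        intro y hy
        have := hw.1 y hy
        simp only [decide_eq_true_eq]
        omega
      rw [List.countP_cons, h0]
      simp
    · have hax : a < x := hw.1 x hxt
      rw [List.countP_cons, if_pos (decide_eq_true hax), List.getD_cons_succ]
      exact ih hw.2 hxt

private lemma reconstruct {l : List ℕ} (hl : l.Nodup) :
    l = (std l).map (fun r => ((l.toFinset.sort (· ≤ ·)).getD r 0)) := by
  rw [std_eq_map, List.map_map]
  conv_lhs => rw [← List.map_id l]
  apply List.map_congr_left
  intro x hx
  have hperm : l.Perm (l.toFinset.sort (· ≤ ·)) :=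
    ((Finset.sort_perm_toList _ _).trans (List.toFinset_toList hl)).symm
  show x = (l.toFinset.sort (· ≤ ·)).getD (cb l x) 0
  rw [cb_eq_countP, hperm.countP_eq]
  exact (sorted_getD (Finset.sortedLT_sort _).pairwise
    ((Finset.mem_sort _).mpr (List.mem_toFinset.mpr hx))).symm

private lemma factor_append {l₁ l₂ : List ℕ} {i k : ℕ} (h : i + k ≤ l₁.length) :
    ((l₁ ++ l₂).drop i).take k = ((l₁.drop i).take k) := by
  rw [List.drop_append_of_le_length (by omega),
    List.take_append_of_le_length (by rw [List.length_drop]; omega)]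

private lemma factor_take {l : List ℕ} {m i k : ℕ} (h : i + k ≤ m) :
    ((l.take m).drop i).take k = ((l.drop i).take k) := by
  rw [List.drop_take, List.take_take]
  congr 1
  omega

private lemma occursAt_of_take {σ τ : List ℕ} {m i : ℕ}
    (h : OccursAt τ (σ.take m) i) : OccursAt τ σ i := by
  obtain ⟨h1, h2⟩ := h
  rw [List.length_take] at h1
  have h1' : i + τ.length ≤ m := le_trans h1 (min_le_left _ _)
  refine ⟨le_trans h1 (min_le_right _ _), ?_⟩
  rw [← factor_take h1']
  exact h2

end AuxStd
section AuxIns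

open List

private def bump (v x : ℕ) : ℕ := if v ≤ x then x + 1 else x

private lemma bump_lt_iff (v x y : ℕ) : bump v x < bump v y ↔ x < y := by
  unfold bump; split_ifs <;> omega

private def ins (v : ℕ) (π : List ℕ) : List ℕ := π.map (bump v) ++ [v]

private lemma ins_length (v : ℕ) (π : List ℕ) : (ins v π).length = π.length + 1 := by
  simp [ins]

private lemma ins_isPermList {v : ℕ} {π : List ℕ} (hπ : IsPermList π) (hv : v ≤ π.length) :
    IsPermList (ins v π) := by
  rw [IsPermList, ins_length]
  apply perm_range_of
  · rw [ins, List.nodup_append]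
    refine ⟨?_, List.nodup_singleton v, ?_⟩
    · refine (nodup_of_isPermList hπ).map_on ?_
      intro x hx y hy hxy
      rcases lt_trichotomy x y with h | h | h
      · exact absurd hxy (Nat.ne_of_lt ((bump_lt_iff v x y).mpr h))
      · exact h
      · exact absurd hxy.symm (Nat.ne_of_lt ((bump_lt_iff v y x).mpr h))
    · intro a ha b hav hab
      rw [List.mem_singleton] at hav
      subst hav
      rw [List.mem_map] at ha
      obtain ⟨x, hx, hb⟩ := ha
      unfold bump at hb
      split_ifs at hb <;> omega
  · intro x hx
    rw [ins, List.mem_append] at hx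
    rcases hx with hx | hx
    · rw [List.mem_map] at hx
      obtain ⟨y, hy, rfl⟩ := hx
      have := mem_lt_of_isPermList hπ hy
      unfold bump
      split_ifs <;> omega
    · rw [List.mem_singleton] at hx
      omega
  · rw [ins_length]

private lemma ins_take (v : ℕ) (π : List ℕ) : (ins v π).take π.length = π.map (bump v) := by
  rw [ins]
  exact List.take_left' (by simp)

private lemma ins_std_take {v : ℕ} {π : List ℕ} (hπ : IsPermList π) :
    std ((ins v π).take π.length) = π := by
  rw [ins_take, std_map_of (fun x _ y _ => bump_lt_iff v x y), std_of_isPermList hπ]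

private lemma ins_getLast? (v : ℕ) (π : List ℕ) : (ins v π).getLast? = some v :=
  List.getLast?_concat

private lemma ins_no_occ {P : Set (List ℕ)} {v : ℕ} {π : List ℕ}
    (hπ : IsPermList π) (hav : AvoidsAll P π)
    {τ : List ℕ} (hτ : τ ∈ P) {i : ℕ} (hik : i + τ.length ≤ π.length) :
    ¬ OccursAt τ (ins v π) i := by
  rintro ⟨-, hstd⟩
  apply hav τ hτ
  have hfac : ((ins v π).drop i).take τ.length = ((π.drop i).take τ.length).map (bump v) := by
    rw [ins, factor_append (by simpa using hik), factor_map]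
  rw [hfac, std_map_of (fun x _ y _ => bump_lt_iff v x y)] at hstd
  exact ⟨i, hik, hstd⟩

private lemma exists_bad {P : Set (List ℕ)} {σ : List ℕ} (h : ¬ AvoidsAll P σ) :
    ∃ τ, τ ∈ P ∧ ∃ i, OccursAt τ σ i := by
  by_contra h2
  push_neg at h2
  exact h (fun τ hτ hocc => h2 τ hτ hocc.choose hocc.choose_spec)

private noncomputable def badτ {P : Set (List ℕ)} (σ : List ℕ) (h : ¬ AvoidsAll P σ) :
    List ℕ :=
  (exists_bad h).choose

private lemma badτ_spec {P : Set (List ℕ)} (σ : List ℕ) (h : ¬ AvoidsAll P σ) :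
    badτ σ h ∈ P ∧ ∃ i, OccursAt (badτ σ h) σ i :=
  (exists_bad h).choose_spec

private lemma finite_A (n : ℕ) (Q : List ℕ → Prop) :
    Finite {σ : List ℕ // σ.length = n ∧ IsPermList σ ∧ Q σ} := by
  apply Finite.of_injective
    (fun σ : {σ : List ℕ // σ.length = n ∧ IsPermList σ ∧ Q σ} =>
      (⟨σ.1, by
        rw [List.mem_permutations]
        have h := σ.2.2.1
        rwa [IsPermList, σ.2.1] at h⟩ : {l : List ℕ // l ∈ (List.range n).permutations}))
  intro a b h
  simp only [Subtype.mk.injEq] at h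
  exact Subtype.ext h

private lemma finite_P {P : Set (List ℕ)} (hP : PatternAntichain P) (k : ℕ) :
    Finite {τ : List ℕ // τ ∈ P ∧ τ.length = k} := by
  apply Finite.of_injective
    (fun τ : {τ : List ℕ // τ ∈ P ∧ τ.length = k} =>
      (⟨τ.1, by
        rw [List.mem_permutations]
        have h := (hP.1 τ.1 τ.2.1).1
        rwa [IsPermList, τ.2.2] at h⟩ : {l : List ℕ // l ∈ (List.range k).permutations}))
  intro a b h
  simp only [Subtype.mk.injEq] at h
  exact Subtype.ext h

private lemma nat_card_sigma {m : ℕ} (f : Fin m → Type) [hf : ∀ i, Finite (f i)] :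
    Nat.card ((i : Fin m) × f i) = ∑ i, Nat.card (f i) := by
  classical
  letI : ∀ i, Fintype (f i) := fun i => Fintype.ofFinite _
  rw [Nat.card_eq_fintype_card, Fintype.card_sigma]
  exact Finset.sum_congr rfl fun i _ => (Nat.card_eq_fintype_card).symm

private lemma avoidCount_zero {P : Set (List ℕ)} (hP : PatternAntichain P) :
    avoidCount P 0 = 1 := by
  rw [avoidCount]
  haveI : Unique {σ : List ℕ // σ.length = 0 ∧ IsPermList σ ∧ AvoidsAll P σ} :=
    { default := ⟨[], rfl, by simp [IsPermList], by
        intro τ hτ hocc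
        obtain ⟨i, h1, -⟩ := hocc
        have h2 := (hP.1 τ hτ).2
        have h1' : i + τ.length ≤ 0 := by simpa using h1
        omega⟩
      uniq := fun x => Subtype.ext (List.length_eq_zero_iff.mp x.2.1) }
  exact Nat.card_unique

end AuxIns
section AuxKey

open List

private lemma key {P : Set (List ℕ)} (hP : PatternAntichain P) (p : ℕ → ℕ)
    (hp : ∀ k, p k = Nat.card {τ : List ℕ // τ ∈ P ∧ τ.length = k}) (n : ℕ) :
    (n + 1) * avoidCount P n ≤
      avoidCount P (n + 1) +
        ∑ k ∈ Finset.range (n + 2), p k * ((n + 1).choose k) * avoidCount P (n + 1 - k) := by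
  classical
  haveI I1 : ∀ m : ℕ, Finite {σ : List ℕ // σ.length = m ∧ IsPermList σ ∧ AvoidsAll P σ} :=
    fun m => finite_A m _
  haveI I2 : ∀ k : ℕ, Finite {τ : List ℕ // τ ∈ P ∧ τ.length = k} := finite_P hP
  have hσlen : ∀ (v : ℕ) (π : List ℕ), π.length = n → (ins v π).length = n + 1 := by
    intro v π h
    rw [ins_length, h]
  have hσperm : ∀ (v : ℕ) (π : List ℕ), v ≤ n → π.length = n → IsPermList π →
      IsPermList (ins v π) := by
    intro v π hv h hp'
    exact ins_isPermList hp' (by omega)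
  have hend : ∀ (v : ℕ) (π : List ℕ), π.length = n → IsPermList π → AvoidsAll P π →
      ∀ τ ∈ P, ∀ i, OccursAt τ (ins v π) i → i + τ.length = n + 1 := by
    intro v π hπl hπp hπa τ hτ i hocc
    have h1 := hocc.1
    rw [ins_length, hπl] at h1
    by_contra hne
    exact ins_no_occ hπp hπa hτ (by omega) hocc
  have hbad : ∀ (v : ℕ) (π : List ℕ), π.length = n → IsPermList π → AvoidsAll P π →
      ∀ h : ¬ AvoidsAll P (ins v π),
        badτ (ins v π) h ∈ P ∧ 2 ≤ (badτ (ins v π) h).length ∧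
          (badτ (ins v π) h).length ≤ n + 1 ∧
          OccursAt (badτ (ins v π) h) (ins v π) (n + 1 - (badτ (ins v π) h).length) := by
    intro v π hπl hπp hπa h
    obtain ⟨hmem, i, hocc⟩ := badτ_spec (ins v π) h
    have hik := hend v π hπl hπp hπa _ hmem i hocc
    have h2 := (hP.1 _ hmem).2
    have hi : i = n + 1 - (badτ (ins v π) h).length := by omega
    exact ⟨hmem, h2, by omega, hi ▸ hocc⟩
  have hS : ∀ (v : ℕ) (π : List ℕ), v ≤ n → π.length = n → IsPermList π →
      ∀ k : ℕ, k ≤ n + 1 →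
      ((ins v π).drop (n + 1 - k)).toFinset ∈
        Finset.powersetCard k (Finset.range (n + 1)) := by
    intro v π hv hπl hπp k hk
    have hσp := hσperm v π hv hπl hπp
    have hσl := hσlen v π hπl
    rw [Finset.mem_powersetCard]
    constructor
    · intro a ha
      rw [List.mem_toFinset] at ha
      have h4 := mem_lt_of_isPermList hσp ((List.drop_sublist _ _).subset ha)
      rw [hσl] at h4
      exact Finset.mem_range.mpr h4
    · have hnd : ((ins v π).drop (n + 1 - k)).Nodup :=
        (List.drop_sublist _ _).nodup (nodup_of_isPermList hσp)
      rw [List.toFinset_card_of_nodup hnd, List.length_drop, hσl]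
      omega
  have hρ : ∀ (v : ℕ) (π : List ℕ), v ≤ n → π.length = n → IsPermList π → AvoidsAll P π →
      ∀ k : ℕ, 2 ≤ k → k ≤ n + 1 →
      ((std ((ins v π).take (n + 1 - k))).length = n + 1 - k ∧
        IsPermList (std ((ins v π).take (n + 1 - k))) ∧
        AvoidsAll P (std ((ins v π).take (n + 1 - k)))) := by
    intro v π hv hπl hπp hπa k h2 hk
    have hσp := hσperm v π hv hπl hπp
    have hσl := hσlen v π hπl
    have htnd : ((ins v π).take (n + 1 - k)).Nodup :=
      (List.take_sublist _ _).nodup (nodup_of_isPermList hσp)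
    refine ⟨?_, isPermList_std htnd, ?_⟩
    · rw [std_length, List.length_take, hσl]
      omega
    · intro τ hτ hocc
      obtain ⟨j, hj⟩ := hocc
      rw [occursAt_std_iff] at hj
      have hjlen := hj.1
      rw [List.length_take, hσl] at hjlen
      have hj' := occursAt_of_take hj
      have he := hend v π hπl hπp hπa τ hτ j hj'
      have h2' := (hP.1 τ hτ).2
      have h3 : j + τ.length ≤ n + 1 - k := le_trans hjlen (min_le_left _ _)
      omega
  have hrecon : ∀ (v : ℕ) (π : List ℕ), v ≤ n → π.length = n → IsPermList π →
      ∀ k : ℕ, k ≤ n + 1 →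
      ∀ τ : List ℕ, τ.length = k →
      std (((ins v π).drop (n + 1 - k)).take k) = τ →
      ins v π =
        ((std ((ins v π).take (n + 1 - k))).map
          (fun r => (((Finset.range (n + 1)) \
            ((ins v π).drop (n + 1 - k)).toFinset).sort (· ≤ ·)).getD r 0)) ++
        (τ.map
          (fun r => ((((ins v π).drop (n + 1 - k)).toFinset).sort (· ≤ ·)).getD r 0)) := by
    intro v π hv hπl hπp k hk τ hτl hstdτ
    have hσp := hσperm v π hv hπl hπp
    have hσl := hσlen v π hπl
    have hσnd := nodup_of_isPermList hσp
    have htd : (ins v π).take (n + 1 - k) ++ (ins v π).drop (n + 1 - k) = ins v π :=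
      List.take_append_drop _ _
    have hdnd : ((ins v π).drop (n + 1 - k)).Nodup :=
      (List.drop_sublist _ _).nodup hσnd
    have hdlen : ((ins v π).drop (n + 1 - k)).length = k := by
      rw [List.length_drop, hσl]
      omega
    have hstd_drop : std ((ins v π).drop (n + 1 - k)) = τ := by
      have h5 : ((ins v π).drop (n + 1 - k)).take k = (ins v π).drop (n + 1 - k) :=
        List.take_of_length_le (le_of_eq hdlen)
      rw [← hstdτ, h5]
    have hdrop_eq : (ins v π).drop (n + 1 - k) =
        τ.map (fun r => ((((ins v π).drop (n + 1 - k)).toFinset).sort (· ≤ ·)).getD r 0) := by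
      conv_lhs => rw [reconstruct hdnd]
      rw [hstd_drop]
    have htnd : ((ins v π).take (n + 1 - k)).Nodup := (List.take_sublist _ _).nodup hσnd
    have hTF : ((ins v π).take (n + 1 - k)).toFinset =
        Finset.range (n + 1) \ ((ins v π).drop (n + 1 - k)).toFinset := by
      have hdisj : List.Disjoint ((ins v π).take (n + 1 - k)) ((ins v π).drop (n + 1 - k)) := by
        have h3 := hσnd
        rw [← htd, List.nodup_append] at h3
        exact fun a ha hb => h3.2.2 a ha a hb rfl
      ext a
      simp only [List.mem_toFinset, Finset.mem_sdiff, Finset.mem_range]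
      constructor
      · intro ha
        have haσ : a ∈ ins v π := by
          rw [← htd]
          exact List.mem_append_left _ ha
        have h4 := mem_lt_of_isPermList hσp haσ
        rw [hσl] at h4
        exact ⟨h4, fun hb => hdisj ha hb⟩
      · rintro ⟨ha1, ha2⟩
        have haσ : a ∈ ins v π := hσp.mem_iff.mpr (by
          rw [hσl]
          exact List.mem_range.mpr ha1)
        rw [← htd, List.mem_append] at haσ
        rcases haσ with h | h
        · exact h
        · exact absurd h ha2
    have htake_eq : (ins v π).take (n + 1 - k) =
        (std ((ins v π).take (n + 1 - k))).map
          (fun r => (((Finset.range (n + 1)) \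
            ((ins v π).drop (n + 1 - k)).toFinset).sort (· ≤ ·)).getD r 0) := by
      conv_lhs => rw [reconstruct htnd]
      rw [hTF]
    conv_lhs => rw [← htd]
    rw [← htake_eq, ← hdrop_eq]
  have hrecov_v : ∀ (v : ℕ) (π : List ℕ), (ins v π).getLast?.getD 0 = v := by
    intro v π
    rw [ins_getLast?]
    rfl
  have hrecov_π : ∀ (v : ℕ) (π : List ℕ), π.length = n → IsPermList π →
      std ((ins v π).take n) = π := by
    intro v π hπl hπp
    have h := ins_std_take (v := v) hπp
    rwa [hπl] at h
  -- the injection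
  have hle : Nat.card (Fin (n + 1) × {σ : List ℕ // σ.length = n ∧ IsPermList σ ∧ AvoidsAll P σ}) ≤
      Nat.card ({σ : List ℕ // σ.length = n + 1 ∧ IsPermList σ ∧ AvoidsAll P σ} ⊕
        ((k : Fin (n + 2)) × ({τ : List ℕ // τ ∈ P ∧ τ.length = (k : ℕ)} ×
          ({s : Finset ℕ // s ∈ Finset.powersetCard (k : ℕ) (Finset.range (n + 1))} ×
          {σ : List ℕ // σ.length = n + 1 - (k : ℕ) ∧ IsPermList σ ∧ AvoidsAll P σ})))) := by
    refine Nat.card_le_card_of_injective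
      (fun x : Fin (n + 1) × {σ : List ℕ // σ.length = n ∧ IsPermList σ ∧ AvoidsAll P σ} =>
        if h : AvoidsAll P (ins (x.1 : ℕ) x.2.1) then
          Sum.inl ⟨ins (x.1 : ℕ) x.2.1, hσlen _ _ x.2.2.1,
            hσperm _ _ (Nat.lt_succ_iff.mp x.1.2) x.2.2.1 x.2.2.2.1, h⟩
        else
          Sum.inr ⟨⟨(badτ (ins (x.1 : ℕ) x.2.1) h).length,
              Nat.lt_succ_of_le (hbad _ _ x.2.2.1 x.2.2.2.1 x.2.2.2.2 h).2.2.1⟩,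
            ⟨badτ (ins (x.1 : ℕ) x.2.1) h, (hbad _ _ x.2.2.1 x.2.2.2.1 x.2.2.2.2 h).1, rfl⟩,
            ⟨((ins (x.1 : ℕ) x.2.1).drop
                (n + 1 - (badτ (ins (x.1 : ℕ) x.2.1) h).length)).toFinset,
              hS _ _ (Nat.lt_succ_iff.mp x.1.2) x.2.2.1 x.2.2.2.1 _
                (hbad _ _ x.2.2.1 x.2.2.2.1 x.2.2.2.2 h).2.2.1⟩,
            ⟨std ((ins (x.1 : ℕ) x.2.1).take
                (n + 1 - (badτ (ins (x.1 : ℕ) x.2.1) h).length)),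
              (hρ _ _ (Nat.lt_succ_iff.mp x.1.2) x.2.2.1 x.2.2.2.1 x.2.2.2.2 _
                (hbad _ _ x.2.2.1 x.2.2.2.1 x.2.2.2.2 h).2.1
                (hbad _ _ x.2.2.1 x.2.2.2.1 x.2.2.2.2 h).2.2.1).1,
              (hρ _ _ (Nat.lt_succ_iff.mp x.1.2) x.2.2.1 x.2.2.2.1 x.2.2.2.2 _
                (hbad _ _ x.2.2.1 x.2.2.2.1 x.2.2.2.2 h).2.1
                (hbad _ _ x.2.2.1 x.2.2.2.1 x.2.2.2.2 h).2.2.1).2.1,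
              (hρ _ _ (Nat.lt_succ_iff.mp x.1.2) x.2.2.1 x.2.2.2.1 x.2.2.2.2 _
                (hbad _ _ x.2.2.1 x.2.2.2.1 x.2.2.2.2 h).2.1
                (hbad _ _ x.2.2.1 x.2.2.2.1 x.2.2.2.2 h).2.2.1).2.2⟩⟩) ?_
    intro x y hxy
    have hvx : ((x.1 : ℕ)) ≤ n := Nat.lt_succ_iff.mp x.1.2
    have hvy : ((y.1 : ℕ)) ≤ n := Nat.lt_succ_iff.mp y.1.2
    dsimp only at hxy
    have hins : ins (x.1 : ℕ) x.2.1 = ins (y.1 : ℕ) y.2.1 := by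
      by_cases hx : AvoidsAll P (ins (x.1 : ℕ) x.2.1) <;>
        by_cases hy : AvoidsAll P (ins (y.1 : ℕ) y.2.1)
      · rw [dif_pos hx, dif_pos hy] at hxy
        have h1 := Sum.inl.inj hxy
        exact congrArg Subtype.val h1
      · rw [dif_pos hx, dif_neg hy] at hxy
        simp at hxy
      · rw [dif_neg hx, dif_pos hy] at hxy
        simp at hxy
      · rw [dif_neg hx, dif_neg hy] at hxy
        have h1 := Sum.inr.inj hxy
        have hbx := hbad _ _ x.2.2.1 x.2.2.2.1 x.2.2.2.2 hx
        have hby := hbad _ _ y.2.2.1 y.2.2.2.1 y.2.2.2.2 hy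
        have hτe : badτ (ins (x.1 : ℕ) x.2.1) hx = badτ (ins (y.1 : ℕ) y.2.1) hy :=
          congrArg (fun w : ((k : Fin (n + 2)) ×
            ({τ : List ℕ // τ ∈ P ∧ τ.length = (k : ℕ)} ×
            ({s : Finset ℕ // s ∈ Finset.powersetCard (k : ℕ) (Finset.range (n + 1))} ×
            {σ : List ℕ // σ.length = n + 1 - (k : ℕ) ∧ IsPermList σ ∧ AvoidsAll P σ}))) =>
              w.2.1.1) h1
        have hSe : ((ins (x.1 : ℕ) x.2.1).drop
              (n + 1 - (badτ (ins (x.1 : ℕ) x.2.1) hx).length)).toFinset =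
            ((ins (y.1 : ℕ) y.2.1).drop
              (n + 1 - (badτ (ins (y.1 : ℕ) y.2.1) hy).length)).toFinset :=
          congrArg (fun w : ((k : Fin (n + 2)) ×
            ({τ : List ℕ // τ ∈ P ∧ τ.length = (k : ℕ)} ×
            ({s : Finset ℕ // s ∈ Finset.powersetCard (k : ℕ) (Finset.range (n + 1))} ×
            {σ : List ℕ // σ.length = n + 1 - (k : ℕ) ∧ IsPermList σ ∧ AvoidsAll P σ}))) =>
              w.2.2.1.1) h1
        have hρe : std ((ins (x.1 : ℕ) x.2.1).take
              (n + 1 - (badτ (ins (x.1 : ℕ) x.2.1) hx).length)) =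
            std ((ins (y.1 : ℕ) y.2.1).take
              (n + 1 - (badτ (ins (y.1 : ℕ) y.2.1) hy).length)) :=
          congrArg (fun w : ((k : Fin (n + 2)) ×
            ({τ : List ℕ // τ ∈ P ∧ τ.length = (k : ℕ)} ×
            ({s : Finset ℕ // s ∈ Finset.powersetCard (k : ℕ) (Finset.range (n + 1))} ×
            {σ : List ℕ // σ.length = n + 1 - (k : ℕ) ∧ IsPermList σ ∧ AvoidsAll P σ}))) =>
              w.2.2.2.1) h1
        rw [hrecon _ _ hvx x.2.2.1 x.2.2.2.1 _ hbx.2.2.1 _ rfl hbx.2.2.2.2,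
          hrecon _ _ hvy y.2.2.1 y.2.2.2.1 _ hby.2.2.1 _ rfl hby.2.2.2.2,
          hSe, hρe, hτe]
    have hv : ((x.1 : ℕ)) = ((y.1 : ℕ)) := by
      have h1 := hrecov_v (x.1 : ℕ) x.2.1
      rw [hins, hrecov_v] at h1
      exact h1.symm
    have hπe : x.2.1 = y.2.1 := by
      have h1 := hrecov_π (x.1 : ℕ) x.2.1 x.2.2.1 x.2.2.2.1
      have h2 := hrecov_π (y.1 : ℕ) y.2.1 y.2.2.1 y.2.2.2.1
      rw [hins] at h1
      exact h1.symm.trans h2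
    exact Prod.ext (Fin.ext hv) (Subtype.ext hπe)
  -- count both sides
  have hfin : Nat.card (Fin (n + 1)) = n + 1 := by simp
  rw [Nat.card_prod, hfin, Nat.card_sum, nat_card_sigma] at hle
  have hfiber : ∀ k : Fin (n + 2),
      Nat.card ({τ : List ℕ // τ ∈ P ∧ τ.length = (k : ℕ)} ×
        ({s : Finset ℕ // s ∈ Finset.powersetCard (k : ℕ) (Finset.range (n + 1))} ×
        {σ : List ℕ // σ.length = n + 1 - (k : ℕ) ∧ IsPermList σ ∧ AvoidsAll P σ})) =
      p (k : ℕ) * ((n + 1).choose (k : ℕ) * avoidCount P (n + 1 - (k : ℕ))) := by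
    intro k
    rw [Nat.card_prod, Nat.card_prod, ← hp]
    rw [Nat.card_eq_fintype_card, Fintype.card_coe, Finset.card_powersetCard,
      Finset.card_range]
    rfl
  rw [Finset.sum_congr rfl (fun k _ => hfiber k)] at hle
  rw [Fin.sum_univ_eq_sum_range (fun k => p k * ((n + 1).choose k * avoidCount P (n + 1 - k)))
    (n + 2)] at hle
  simp only [avoidCount, mul_assoc]
  exact hle

end AuxKey

/-- If `α > 0` is a root of `1 - t + Σ_{k≥2} p_k t^k / k!`, then the number of
permutations of length `n` avoiding the antichain `P` satisfies `a^P_n ≥ α^{-n} n!`. -/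
theorem statement1 (P : Set (List ℕ)) (hP : PatternAntichain P)
    (p : ℕ → ℕ) (hp : ∀ k : ℕ, p k = Nat.card {τ : List ℕ // τ ∈ P ∧ τ.length = k})
    (α : ℝ) (hα : 0 < α)
    (hsum : Summable fun k : ℕ => (p (k + 2) : ℝ) * α ^ (k + 2) / ((k + 2).factorial : ℝ))
    (hroot : 1 - α + ∑' k : ℕ, (p (k + 2) : ℝ) * α ^ (k + 2) / ((k + 2).factorial : ℝ) = 0) :
    ∀ n : ℕ, (n.factorial : ℝ) / α ^ n ≤ (avoidCount P n : ℝ) := by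
  have hp0 : p 0 = 0 := by
    rw [hp]
    haveI : IsEmpty {τ : List ℕ // τ ∈ P ∧ τ.length = 0} :=
      ⟨fun τ => by
        have h2 := (hP.1 τ.1 τ.2.1).2
        have h3 := τ.2.2
        omega⟩
    exact Nat.card_of_isEmpty
  have hp1 : p 1 = 0 := by
    rw [hp]
    haveI : IsEmpty {τ : List ℕ // τ ∈ P ∧ τ.length = 1} :=
      ⟨fun τ => by
        have h2 := (hP.1 τ.1 τ.2.1).2
        have h3 := τ.2.2
        omega⟩
    exact Nat.card_of_isEmpty
  have ha0 := avoidCount_zero hP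
  have hpartial : ∀ N : ℕ,
      ∑ j ∈ Finset.range N, (p (j + 2) : ℝ) * α ^ (j + 2) / ((j + 2).factorial : ℝ) ≤ α - 1 := by
    intro N
    have h1 := Summable.sum_le_tsum (Finset.range N) (fun i _ => by positivity) hsum
    linarith
  set c : ℕ → ℝ := fun m => (avoidCount P m : ℝ) * α ^ m / (m.factorial : ℝ) with hc
  have hc0 : c 0 = 1 := by simp [hc, ha0]
  have hmono : ∀ m, ∀ j, j ≤ m → c j ≤ c m := by
    intro m
    induction m with
    | zero =>
      intro j hj
      have hj0 : j = 0 := by omega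
      subst hj0
      exact le_rfl
    | succ m ih =>
      have hstep : c m ≤ c (m + 1) := by
        have hkeyN := key hP p hp m
        have hkeyR : ((m + 1 : ℕ) : ℝ) * (avoidCount P m : ℝ) ≤
            (avoidCount P (m + 1) : ℝ) + ∑ k ∈ Finset.range (m + 2),
              (p k : ℝ) * ((m + 1).choose k : ℝ) * (avoidCount P (m + 1 - k) : ℝ) := by
          exact_mod_cast hkeyN
        have hcoef : (0:ℝ) < α ^ (m + 1) / ((m + 1).factorial : ℝ) := by positivity
        have hmul := mul_le_mul_of_nonneg_right hkeyR hcoef.le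
        rw [add_mul, Finset.sum_mul] at hmul
        have hL : ((m + 1 : ℕ) : ℝ) * (avoidCount P m : ℝ) *
            (α ^ (m + 1) / ((m + 1).factorial : ℝ)) = α * c m := by
          simp only [hc]
          rw [Nat.factorial_succ, pow_succ]
          push_cast
          have hm1 : (0:ℝ) < (m.factorial : ℝ) := by positivity
          field_simp
        have hR1 : (avoidCount P (m + 1) : ℝ) * (α ^ (m + 1) / ((m + 1).factorial : ℝ)) =
            c (m + 1) := by
          simp only [hc]
          field_simp
        have hterm : ∀ k ∈ Finset.range (m + 2),
            (p k : ℝ) * ((m + 1).choose k : ℝ) * (avoidCount P (m + 1 - k) : ℝ) *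
              (α ^ (m + 1) / ((m + 1).factorial : ℝ)) =
            ((p k : ℝ) * α ^ k / (k.factorial : ℝ)) * c (m + 1 - k) := by
          intro k hk
          rw [Finset.mem_range] at hk
          have hk' : k ≤ m + 1 := by omega
          have hfact : ((m + 1).choose k : ℝ) * (k.factorial : ℝ) *
              ((m + 1 - k).factorial : ℝ) = ((m + 1).factorial : ℝ) := by
            exact_mod_cast congrArg (Nat.cast : ℕ → ℝ)
              (Nat.choose_mul_factorial_mul_factorial hk')
          have hpow : α ^ k * α ^ (m + 1 - k) = α ^ (m + 1) := by
            rw [← pow_add]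
            congr 1
            omega
          simp only [hc]
          rw [← hfact, ← hpow]
          have h1 : (0:ℝ) < (k.factorial : ℝ) := by positivity
          have h2 : (0:ℝ) < ((m + 1 - k).factorial : ℝ) := by positivity
          have h3 : (0:ℝ) < (((m + 1).choose k : ℕ) : ℝ) := by
            exact_mod_cast Nat.choose_pos hk'
          field_simp
        rw [hL, hR1, Finset.sum_congr rfl hterm] at hmul
        have h1le : (1:ℝ) ≤ c m := by
          rw [← hc0]
          exact ih 0 (Nat.zero_le m)
        have hcm0 : (0:ℝ) ≤ c m := by linarith
        have hsum_le : ∑ k ∈ Finset.range (m + 2),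
            ((p k : ℝ) * α ^ k / (k.factorial : ℝ)) * c (m + 1 - k) ≤ (α - 1) * c m := by
          have hstep1 : ∀ k ∈ Finset.range (m + 2),
              ((p k : ℝ) * α ^ k / (k.factorial : ℝ)) * c (m + 1 - k) ≤
              ((p k : ℝ) * α ^ k / (k.factorial : ℝ)) * c m := by
            intro k hk
            rw [Finset.mem_range] at hk
            rcases Nat.lt_or_ge k 2 with h2 | h2
            · interval_cases k <;> simp [hp0, hp1]
            · exact mul_le_mul_of_nonneg_left (ih (m + 1 - k) (by omega)) (by positivity)
          calc ∑ k ∈ Finset.range (m + 2),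
                ((p k : ℝ) * α ^ k / (k.factorial : ℝ)) * c (m + 1 - k)
              ≤ ∑ k ∈ Finset.range (m + 2),
                ((p k : ℝ) * α ^ k / (k.factorial : ℝ)) * c m :=
                Finset.sum_le_sum hstep1
            _ = (∑ k ∈ Finset.range (m + 2),
                (p k : ℝ) * α ^ k / (k.factorial : ℝ)) * c m := by
                rw [Finset.sum_mul]
            _ ≤ (α - 1) * c m := by
                apply mul_le_mul_of_nonneg_right _ hcm0
                have hpeel : ∑ k ∈ Finset.range (m + 2),
                    (p k : ℝ) * α ^ k / (k.factorial : ℝ) =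
                    (∑ j ∈ Finset.range m,
                      (p (j + 2) : ℝ) * α ^ (j + 2) / ((j + 2).factorial : ℝ)) +
                    ((p 1 : ℝ) * α ^ 1 / ((1 : ℕ).factorial : ℝ)) +
                    ((p 0 : ℝ) * α ^ 0 / ((0 : ℕ).factorial : ℝ)) := by
                  rw [Finset.sum_range_succ', Finset.sum_range_succ']
                rw [hpeel]
                simp only [hp0, hp1, Nat.cast_zero, zero_mul, zero_div, add_zero]
                exact hpartial m
        linarith
      intro j hj
      by_cases h : j = m + 1
      · subst h
        exact le_rfl
      · exact le_trans (ih j (by omega)) hstep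
  intro n
  have h1 : (1:ℝ) ≤ c n := by
    rw [← hc0]
    exact hmono n 0 (Nat.zero_le n)
  have hcn : c n = (avoidCount P n : ℝ) * α ^ n / (n.factorial : ℝ) := by simp only [hc]
  rw [hcn] at h1
  have hnf : (0:ℝ) < (n.factorial : ℝ) := by positivity
  rw [le_div_iff₀ hnf] at h1
  rw [div_le_iff₀ (by positivity : (0:ℝ) < α ^ n)]
  linarith
end

section
/- Let τ be a single consecutive pattern of length k ≥ 2, and suppose α > 0 satisfies 1 − α + α^k / k! = 0. Then for every n ≥ 0, the number of permutations of length n avoiding τ as a consecutive pattern is at least α^{−n} · n!. -/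
namespace StdAux


def cnt (l : List ℕ) (x : ℕ) : ℕ := (l.filter (· < x)).length

lemma std_eq (l : List ℕ) : std l = l.map (cnt l) := rfl

lemma length_std (l : List ℕ) : (std l).length = l.length := by
  simp [std]

lemma cnt_lt_cnt {l : List ℕ} {a b : ℕ} (ha : a ∈ l) (hab : a < b) :
    cnt l a < cnt l b := by
  unfold cnt
  have h1 : l.filter (· < a) = (l.filter (· < b)).filter (· < a) := by
    rw [List.filter_filter]
    apply List.filter_congr
    intro x _
    by_cases hxa : x < a
    · simp [hxa, lt_trans hxa hab]
    · simp [hxa]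
  rw [h1]
  apply List.length_filter_lt_length_iff_exists.2
  refine ⟨a, ?_, by simp⟩
  simp only [List.mem_filter, decide_eq_true_eq]
  exact ⟨ha, hab⟩

lemma cnt_lt_iff {l : List ℕ} {a b : ℕ} (ha : a ∈ l) (hb : b ∈ l) :
    a < b ↔ cnt l a < cnt l b := by
  constructor
  · exact cnt_lt_cnt ha
  · intro h
    rcases lt_trichotomy a b with h' | h' | h'
    · exact h'
    · subst h'; omega
    · exact absurd (cnt_lt_cnt hb h') (by omega)

lemma cnt_injOn {l : List ℕ} {a b : ℕ} (ha : a ∈ l) (hb : b ∈ l)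
    (h : cnt l a = cnt l b) : a = b := by
  rcases lt_trichotomy a b with h' | h' | h'
  · exact absurd (cnt_lt_cnt ha h') (by omega)
  · exact h'
  · exact absurd (cnt_lt_cnt hb h') (by omega)

lemma std_map {l : List ℕ} {f : ℕ → ℕ}
    (hf : ∀ a ∈ l, ∀ b ∈ l, (a < b ↔ f a < f b)) :
    std (l.map f) = std l := by
  rw [std_eq, std_eq, List.map_map]
  apply List.map_congr_left
  intro a ha
  simp only [Function.comp]
  unfold cnt
  rw [List.filter_map, List.length_map]
  congr 1
  apply List.filter_congr
  intro x hx
  simp only [Function.comp]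
  exact decide_eq_decide.2 (hf x hx a ha).symm



lemma filter_range_lt (n x : ℕ) : ((List.range n).filter (· < x)).length = min x n := by
  induction n with
  | zero => simp
  | succ m ih =>
    rw [List.range_succ, List.filter_append, List.length_append, ih]
    simp only [List.filter_cons, List.filter_nil]
    by_cases h : m < x
    · simp only [h, decide_eq_true_eq, if_pos]
      simp only [List.length_cons, List.length_nil]
      omega
    · rw [if_neg (by simpa using h)]
      simp only [List.length_nil]
      omega

lemma cnt_range {n x : ℕ} (hx : x ≤ n) : cnt (List.range n) x = x := by
  unfold cnt
  rw [filter_range_lt]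
  omega

lemma cnt_perm {l₁ l₂ : List ℕ} (h : l₁.Perm l₂) : cnt l₁ = cnt l₂ := by
  funext x
  unfold cnt
  rw [← List.countP_eq_length_filter, ← List.countP_eq_length_filter]
  exact h.countP_eq _

lemma std_of_permList {l : List ℕ} (h : IsPermList l) : std l = l := by
  rw [std_eq]
  have : ∀ a ∈ l, cnt l a = a := by
    intro a ha
    rw [cnt_perm h]
    have : a < l.length := by
      have := h.mem_iff.1 ha
      simpa using this
    exact cnt_range (le_of_lt this)
  calc l.map (cnt l) = l.map id := List.map_congr_left this
  _ = l := List.map_id l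

lemma std_nodup {l : List ℕ} (h : l.Nodup) : (std l).Nodup := by
  rw [std_eq]
  exact List.Nodup.map_on (fun a ha b hb hab => cnt_injOn ha hb hab) h

lemma perm_range_of_nodup {l : List ℕ} (h : l.Nodup)
    (hlt : ∀ x ∈ l, x < l.length) : IsPermList l := by
  have h1 : l.toFinset = Finset.range l.length := by
    apply Finset.eq_of_subset_of_card_le
    · intro x hx
      simp only [Finset.mem_range]
      exact hlt x (List.mem_toFinset.1 hx)
    · rw [Finset.card_range, List.toFinset_card_of_nodup h]
  have h2 : (List.range l.length).toFinset = Finset.range l.length := by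
    ext x; simp
  have := List.toFinset_eq_iff_perm_dedup.1 (h1.trans h2.symm)
  rwa [h.dedup, List.nodup_range.dedup] at this

lemma cnt_lt_length {l : List ℕ} {a : ℕ} (ha : a ∈ l) : cnt l a < l.length := by
  unfold cnt
  apply List.length_filter_lt_length_iff_exists.2
  exact ⟨a, ha, by simp⟩

lemma std_isPermList {l : List ℕ} (h : l.Nodup) : IsPermList (std l) := by
  apply perm_range_of_nodup (std_nodup h)
  intro x hx
  rw [length_std]
  rw [std_eq, List.mem_map] at hx
  obtain ⟨a, ha, rfl⟩ := hx
  exact cnt_lt_length ha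

lemma std_window (l : List ℕ) (i m : ℕ) :
    std (((std l).drop i).take m) = std ((l.drop i).take m) := by
  have heq : ((std l).drop i).take m = ((l.drop i).take m).map (cnt l) := by
    rw [std_eq, ← List.map_drop, ← List.map_take]
  rw [heq]
  apply std_map
  intro a ha b hb
  have ha' : a ∈ l := List.mem_of_mem_drop (List.mem_of_mem_take ha)
  have hb' : b ∈ l := List.mem_of_mem_drop (List.mem_of_mem_take hb)
  exact cnt_lt_iff ha' hb'

lemma std_inj {l₁ l₂ : List ℕ} (hp : l₁.Perm l₂) (h1 : l₁.Nodup)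
    (h : std l₁ = std l₂) : l₁ = l₂ := by
  rw [std_eq, std_eq, ← cnt_perm hp] at h
  apply List.ext_getElem hp.length_eq
  intro n hn1 hn2
  have hn1' : n < (l₁.map (cnt l₁)).length := by simpa using hn1
  have hn2' : n < (l₂.map (cnt l₁)).length := by simpa using hn2
  have heq : (l₁.map (cnt l₁))[n]'hn1' = (l₂.map (cnt l₁))[n]'hn2' := by
    simp only [h]
  rw [List.getElem_map, List.getElem_map] at heq
  exact cnt_injOn (List.getElem_mem _) (hp.mem_iff.2 (List.getElem_mem _)) heq



lemma sorted_getD_lt_iff {v : List ℕ} (hv : List.Pairwise (· < ·) v)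
    {a b : ℕ} (ha : a < v.length) (hb : b < v.length) :
    a < b ↔ v.getD a 0 < v.getD b 0 := by
  have key : ∀ i j (hi : i < v.length) (hj : j < v.length), i < j → v[i]'hi < v[j]'hj :=
    fun i j hi hj hij => (List.pairwise_iff_getElem.1 hv) i j hi hj hij
  rw [List.getD_eq_getElem v 0 ha, List.getD_eq_getElem v 0 hb]
  constructor
  · exact key a b ha hb
  · intro h
    rcases lt_trichotomy a b with h' | h' | h'
    · exact h'
    · subst h'; omega
    · exact absurd (key b a hb ha h') (by omega)

lemma map_getD_range {v : List ℕ} {m : ℕ} (hm : v.length = m) :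
    (List.range m).map (fun j => v.getD j 0) = v := by
  apply List.ext_getElem (by simp [hm])
  intro n h1 h2
  simp only [List.getElem_map, List.getElem_range]
  exact List.getD_eq_getElem v 0 h2

lemma unstd_perm {π v : List ℕ} (hπ : IsPermList π) (hm : v.length = π.length) :
    (π.map (fun j => v.getD j 0)).Perm v := by
  have h1 := hπ.map (fun j => v.getD j 0)
  rw [show (List.range π.length).map (fun j => v.getD j 0) = v from map_getD_range hm] at h1
  exact h1

lemma unstd_std {π v : List ℕ} (hπ : IsPermList π) (hv : List.Pairwise (· < ·) v)
    (hm : v.length = π.length) :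
    std (π.map (fun j => v.getD j 0)) = π := by
  rw [std_map, std_of_permList hπ]
  intro a ha b hb
  have ha' : a < v.length := by rw [hm]; simpa using hπ.mem_iff.1 ha
  have hb' : b < v.length := by rw [hm]; simpa using hπ.mem_iff.1 hb
  exact sorted_getD_lt_iff hv ha' hb'

lemma occursAt_std_iff {τ l : List ℕ} (i : ℕ) :
    OccursAt τ (std l) i ↔ OccursAt τ l i := by
  unfold OccursAt
  rw [length_std, std_window]

lemma occursAt_append {τ u w : List ℕ} (j : ℕ) :
    OccursAt τ (u ++ w) (u.length + j) ↔ OccursAt τ w j := by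
  unfold OccursAt
  rw [List.drop_length_add_append, List.length_append]
  constructor
  · rintro ⟨h1, h2⟩; exact ⟨by omega, h2⟩
  · rintro ⟨h1, h2⟩; exact ⟨by omega, h2⟩



section Counting

variable (τ : List ℕ)

def A (n : ℕ) : Set (List ℕ) :=
  {σ | σ.length = n ∧ IsPermList σ ∧ AvoidsAll {τ} σ}

def S (n : ℕ) : Set (List ℕ) :=
  {σ | σ.length = n ∧ IsPermList σ ∧ ∀ i, 1 ≤ i → ¬ OccursAt τ σ i}

def Bad (n : ℕ) : Set (List ℕ) := {σ ∈ S τ n | OccursAt τ σ 0}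

lemma avoidsAll_iff (σ : List ℕ) : AvoidsAll {τ} σ ↔ ∀ i, ¬ OccursAt τ σ i := by
  unfold AvoidsAll Occurs
  simp

lemma permList_nodup {σ : List ℕ} (h : IsPermList σ) : σ.Nodup :=
  h.symm.nodup List.nodup_range

lemma permList_mem_lt {σ : List ℕ} (h : IsPermList σ) {x : ℕ} (hx : x ∈ σ) :
    x < σ.length := by simpa using h.mem_iff.1 hx

lemma perm_finite (n : ℕ) : {σ : List ℕ | σ.length = n ∧ IsPermList σ}.Finite := by
  apply Set.Finite.subset (List.finite_toSet (List.range n).permutations)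
  rintro σ ⟨h1, h2⟩
  show σ ∈ (List.range n).permutations
  rw [List.mem_permutations]
  rw [← h1]; exact h2

lemma A_finite (n : ℕ) : (A τ n).Finite :=
  (perm_finite n).subset (fun σ h => ⟨h.1, h.2.1⟩)

lemma S_finite (n : ℕ) : (S τ n).Finite :=
  (perm_finite n).subset (fun σ h => ⟨h.1, h.2.1⟩)

lemma Bad_finite (n : ℕ) : (Bad τ n).Finite :=
  (S_finite τ n).subset (fun σ h => h.1)

lemma avoidCount_eq (n : ℕ) : avoidCount {τ} n = (A τ n).ncard := by
  rw [avoidCount, ← Nat.card_coe_set_eq]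
  rfl

lemma S_subset (n : ℕ) : S τ n ⊆ A τ n ∪ Bad τ n := by
  intro σ hσ
  by_cases h0 : OccursAt τ σ 0
  · exact Or.inr ⟨hσ, h0⟩
  · refine Or.inl ⟨hσ.1, hσ.2.1, (avoidsAll_iff τ σ).2 ?_⟩
    intro i
    rcases Nat.eq_zero_or_pos i with rfl | hi
    · exact h0
    · exact hσ.2.2 i hi

lemma card_S_le (n : ℕ) :
    (S τ n).ncard ≤ avoidCount {τ} n + (Bad τ n).ncard := by
  rw [avoidCount_eq]
  calc (S τ n).ncard ≤ (A τ n ∪ Bad τ n).ncard :=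
        Set.ncard_le_ncard (S_subset τ n) ((A_finite τ n).union (Bad_finite τ n))
    _ ≤ (A τ n).ncard + (Bad τ n).ncard := Set.ncard_union_le _ _

/-- the injection `(h, π) ↦ h :: unstd π` -/
def Φ (n : ℕ) (p : ℕ × List ℕ) : List ℕ :=
  p.1 :: p.2.map (fun j => ((List.range (n+1)).erase p.1).getD j 0)

lemma Φ_spec {n : ℕ} {h : ℕ} (hh : h < n + 1) {π : List ℕ} (hπ : π ∈ A τ n) :
    Φ n (h, π) ∈ S τ (n+1) ∧ std (π.map (fun j => ((List.range (n+1)).erase h).getD j 0)) = π := by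
  obtain ⟨hlen, hperm, havoid⟩ := hπ
  set v := (List.range (n+1)).erase h with hv
  have hmem : h ∈ List.range (n+1) := List.mem_range.2 hh
  have hvlen : v.length = π.length := by
    rw [hlen, hv, List.length_erase_of_mem hmem, List.length_range]
    omega
  have hvsorted : List.Pairwise (· < ·) v :=
    List.Pairwise.sublist List.erase_sublist (List.pairwise_lt_range (n := n+1))
  set t := π.map (fun j => v.getD j 0) with ht
  have htv : t.Perm v := unstd_perm hperm hvlen
  have hstd : std t = π := unstd_std hperm hvsorted hvlen
  have htlen : t.length = n := by rw [ht, List.length_map, hlen]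
  refine ⟨⟨?_, ?_, ?_⟩, hstd⟩
  · simp [Φ, hlen]
  · show (h :: t).Perm (List.range (h :: t).length)
    have : (h :: t).length = n + 1 := by simp [htlen]
    rw [this]
    exact (List.Perm.cons h htv).trans (List.perm_cons_erase hmem).symm
  · intro i hi h_occ
    obtain ⟨j, rfl⟩ : ∃ j, i = 1 + j := ⟨i - 1, by omega⟩
    have : OccursAt τ t j := by
      have := (occursAt_append (τ := τ) (u := [h]) (w := t) j)
      simpa using this.1 (by exact h_occ)
    rw [← occursAt_std_iff] at this
    rw [hstd] at this
    exact (avoidsAll_iff τ π).1 havoid j this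

lemma card_S_lower (n : ℕ) :
    (n + 1) * avoidCount {τ} n ≤ (S τ (n+1)).ncard := by
  rw [avoidCount_eq]
  have hinj : Set.InjOn (Φ n) ((Set.Iio (n+1)) ×ˢ (A τ n)) := by
    rintro ⟨h, π⟩ hm1 ⟨h', π'⟩ hm2 heq
    simp only [Set.mem_prod, Set.mem_Iio] at hm1 hm2
    obtain ⟨hh, hπ⟩ := hm1
    obtain ⟨hh', hπ'⟩ := hm2
    simp only [Φ, List.cons.injEq] at heq
    obtain ⟨rfl, heq2⟩ := heq
    have e1 := (Φ_spec τ hh hπ).2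
    have e2 := (Φ_spec τ hh' hπ').2
    have : π = π' := by rw [← e1, ← e2, heq2]
    simp [this]
  have himg : (Φ n) '' ((Set.Iio (n+1)) ×ˢ (A τ n)) ⊆ S τ (n+1) := by
    rintro σ ⟨⟨h, π⟩, ⟨hh, hπ⟩, rfl⟩
    exact (Φ_spec τ hh hπ).1
  have hcard : ((Set.Iio (n+1) : Set ℕ) ×ˢ (A τ n)).ncard = (n+1) * (A τ n).ncard := by
    rw [← Nat.card_coe_set_eq]
    rw [Nat.card_congr (Equiv.Set.prod _ _)]
    rw [Nat.card_prod, Nat.card_coe_set_eq, Nat.card_coe_set_eq,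
      ← Finset.coe_Iio, Set.ncard_coe_finset, Nat.card_Iio]
  calc (n+1) * (A τ n).ncard = ((Set.Iio (n+1) : Set ℕ) ×ˢ (A τ n)).ncard := hcard.symm
    _ = ((Φ n) '' ((Set.Iio (n+1)) ×ˢ (A τ n))).ncard := (Set.ncard_image_of_injOn hinj).symm
    _ ≤ (S τ (n+1)).ncard := Set.ncard_le_ncard himg (S_finite τ (n+1))

end Counting



lemma perm_of_nodup_toFinset_eq {l₁ l₂ : List ℕ} (h1 : l₁.Nodup) (h2 : l₂.Nodup)
    (h : l₁.toFinset = l₂.toFinset) : l₁.Perm l₂ := by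
  have := List.toFinset_eq_iff_perm_dedup.1 h
  rwa [h1.dedup, h2.dedup] at this

section BadBound

variable {τ : List ℕ} {n : ℕ} (hk2 : 2 ≤ τ.length) (hkn : τ.length ≤ n)

private def k (τ : List ℕ) := τ.length

include hk2 hkn in
lemma bad_take_toFinset {σ : List ℕ} (hσ : σ ∈ Bad τ n) :
    (σ.take τ.length).toFinset ∈ Finset.powersetCard τ.length (Finset.range n) := by
  obtain ⟨⟨hlen, hperm, _⟩, _⟩ := hσ
  have hnd := permList_nodup hperm
  rw [Finset.mem_powersetCard]
  constructor
  · intro x hx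
    rw [List.mem_toFinset] at hx
    rw [Finset.mem_range, ← hlen]
    exact permList_mem_lt hperm (List.mem_of_mem_take hx)
  · rw [List.toFinset_card_of_nodup (hnd.sublist (List.take_sublist _ _))]
    rw [List.length_take, hlen]
    omega

include hk2 hkn in
lemma bad_drop_mem {σ : List ℕ} (hσ : σ ∈ Bad τ n) :
    std (σ.drop τ.length) ∈ A τ (n - τ.length) := by
  obtain ⟨⟨hlen, hperm, hno⟩, _⟩ := hσ
  have hnd := permList_nodup hperm
  have hndd : (σ.drop τ.length).Nodup := hnd.sublist (List.drop_sublist _ _)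
  refine ⟨?_, std_isPermList hndd, ?_⟩
  · rw [length_std, List.length_drop, hlen]
  · rw [avoidsAll_iff]
    intro i hocc
    rw [occursAt_std_iff] at hocc
    have h2 : OccursAt τ (σ.take τ.length ++ σ.drop τ.length) ((σ.take τ.length).length + i) :=
      (occursAt_append i).2 hocc
    rw [List.take_append_drop] at h2
    have hlt : (σ.take τ.length).length = τ.length := by
      rw [List.length_take, hlen]; omega
    rw [hlt] at h2
    exact hno (τ.length + i) (by omega) h2

lemma bad_drop_toFinset {σ : List ℕ} (hσ : σ ∈ Bad τ n) :
    (σ.drop τ.length).toFinset = Finset.range n \ (σ.take τ.length).toFinset := by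
  obtain ⟨⟨hlen, hperm, _⟩, _⟩ := hσ
  have hnd := permList_nodup hperm
  have hnd' : (σ.take τ.length ++ σ.drop τ.length).Nodup := by
    rw [List.take_append_drop]; exact hnd
  rw [List.nodup_append] at hnd'
  obtain ⟨_, _, hdisj⟩ := hnd'
  ext x
  simp only [List.mem_toFinset, Finset.mem_sdiff, Finset.mem_range]
  constructor
  · intro hx
    refine ⟨?_, fun hx' => hdisj x hx' x hx rfl⟩
    rw [← hlen]
    exact permList_mem_lt hperm (List.mem_of_mem_drop hx)
  · rintro ⟨hxn, hxt⟩
    have hxσ : x ∈ σ := by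
      rw [hperm.mem_iff, hlen, List.mem_range]
      exact hxn
    rw [← List.take_append_drop τ.length σ, List.mem_append] at hxσ
    tauto

include hk2 hkn in
lemma card_Bad_le :
    (Bad τ n).ncard ≤ n.choose τ.length * avoidCount {τ} (n - τ.length) := by
  classical
  set m := τ.length with hm
  set Ψ : List ℕ → Finset ℕ × List ℕ :=
    fun σ => ((σ.take m).toFinset, std (σ.drop m)) with hΨ
  set T : Set (Finset ℕ × List ℕ) :=
    (↑(Finset.powersetCard m (Finset.range n)) : Set (Finset ℕ)) ×ˢ A τ (n - m) with hT
  have himg : Ψ '' (Bad τ n) ⊆ T := by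
    rintro _ ⟨σ, hσ, rfl⟩
    exact ⟨bad_take_toFinset hk2 hkn hσ, bad_drop_mem hk2 hkn hσ⟩
  have hinj : Set.InjOn Ψ (Bad τ n) := by
    intro σ hσ σ' hσ' heq
    obtain ⟨⟨hlen, hperm, hno⟩, hocc⟩ := hσ
    obtain ⟨⟨hlen', hperm', hno'⟩, hocc'⟩ := hσ'
    have hnd := permList_nodup hperm
    have hnd' := permList_nodup hperm'
    simp only [hΨ, Prod.mk.injEq] at heq
    obtain ⟨heq1, heq2⟩ := heq
    -- drops are permutations of each other
    have hdropfin : (σ.drop m).toFinset = (σ'.drop m).toFinset := by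
      rw [bad_drop_toFinset ⟨⟨hlen, hperm, hno⟩, hocc⟩,
        bad_drop_toFinset ⟨⟨hlen', hperm', hno'⟩, hocc'⟩, heq1]
    have hdropperm : (σ.drop m).Perm (σ'.drop m) :=
      perm_of_nodup_toFinset_eq (hnd.sublist (List.drop_sublist _ _))
        (hnd'.sublist (List.drop_sublist _ _)) hdropfin
    have hdrop : σ.drop m = σ'.drop m :=
      std_inj hdropperm (hnd.sublist (List.drop_sublist _ _)) heq2
    have htakeperm : (σ.take m).Perm (σ'.take m) :=
      perm_of_nodup_toFinset_eq (hnd.sublist (List.take_sublist _ _))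
        (hnd'.sublist (List.take_sublist _ _)) heq1
    have hstdtake : std (σ.take m) = std (σ'.take m) := by
      have e1 := hocc.2
      have e2 := hocc'.2
      rw [List.drop_zero] at e1 e2
      rw [← hm] at e1 e2
      rw [e1, e2]
    have htake : σ.take m = σ'.take m :=
      std_inj htakeperm (hnd.sublist (List.take_sublist _ _)) hstdtake
    calc σ = σ.take m ++ σ.drop m := (List.take_append_drop m σ).symm
      _ = σ'.take m ++ σ'.drop m := by rw [htake, hdrop]
      _ = σ' := List.take_append_drop m σ'
  have hTcard : T.ncard = n.choose m * avoidCount {τ} (n - m) := by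
    rw [avoidCount_eq, hT, ← Nat.card_coe_set_eq,
      Nat.card_congr (Equiv.Set.prod _ _), Nat.card_prod,
      Nat.card_coe_set_eq, Nat.card_coe_set_eq,
      Set.ncard_coe_finset, Finset.card_powersetCard, Finset.card_range]
  calc (Bad τ n).ncard = (Ψ '' (Bad τ n)).ncard := (Set.ncard_image_of_injOn hinj).symm
    _ ≤ T.ncard := Set.ncard_le_ncard himg
        (by rw [hT]; exact Set.Finite.prod (Finset.finite_toSet _) (A_finite τ _))
    _ = _ := hTcard

end BadBound


section Analysis

variable (a : ℕ → ℕ) (k : ℕ) (α : ℝ)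

theorem main_claim (hk : 2 ≤ k) (hα : 0 < α)
    (hroot : 1 - α + α ^ k / (k.factorial : ℝ) = 0)
    (Hlt : ∀ n : ℕ, n + 1 < k → (n + 1) * a n ≤ a (n + 1))
    (Hge : ∀ n : ℕ, k ≤ n + 1 → (n + 1) * a n ≤ a (n + 1) + (n+1).choose k * a (n + 1 - k)) :
    ∀ n : ℕ, ((n + 1 : ℕ) : ℝ) * a n ≤ α * a (n + 1) := by
  have hK : (0 : ℝ) < (k.factorial : ℝ) := by positivity
  have hα1 : 1 ≤ α := by
    have h0 : 0 ≤ α ^ k / (k.factorial : ℝ) := by positivity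
    linarith
  intro n
  induction n using Nat.strong_induction_on with
  | _ n IH =>
    by_cases hcase : n + 1 < k
    · have h := Hlt n hcase
      have h' : ((n + 1 : ℕ) : ℝ) * a n ≤ (a (n + 1) : ℝ) := by exact_mod_cast h
      have h0 : (0:ℝ) ≤ (a (n+1) : ℝ) := Nat.cast_nonneg _
      nlinarith [h']
    · push_neg at hcase
      -- inner chain lemma
      have D : ∀ j, j ≤ k - 1 →
          (a (n + 1 - k) : ℝ) * ((n + 1 - k + j).factorial : ℝ) ≤
            α ^ j * a (n + 1 - k + j) * ((n + 1 - k).factorial : ℝ) := by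
        intro j
        induction j with
        | zero => intro _; simp
        | succ j ihj =>
          intro hj
          have hj' : j ≤ k - 1 := by omega
          have hd := ihj hj'
          have hm : n + 1 - k + j < n := by omega
          have hIH := IH (n + 1 - k + j) hm
          have hfac : ((n + 1 - k + (j+1)).factorial : ℝ)
              = ((n + 1 - k + j + 1 : ℕ) : ℝ) * ((n + 1 - k + j).factorial : ℝ) := by
            have : (n + 1 - k + (j+1)) = (n + 1 - k + j) + 1 := by omega
            rw [this, Nat.factorial_succ]
            push_cast; ring
          have step1 : (a (n + 1 - k) : ℝ) * ((n + 1 - k + (j+1)).factorial : ℝ)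
              = ((n + 1 - k + j + 1 : ℕ) : ℝ) * ((a (n + 1 - k) : ℝ) * ((n + 1 - k + j).factorial : ℝ)) := by
            rw [hfac]; ring
          rw [step1]
          have hpos : (0:ℝ) ≤ ((n + 1 - k + j + 1 : ℕ) : ℝ) := Nat.cast_nonneg _
          calc ((n + 1 - k + j + 1 : ℕ) : ℝ) * ((a (n + 1 - k) : ℝ) * ((n + 1 - k + j).factorial : ℝ))
              ≤ ((n + 1 - k + j + 1 : ℕ) : ℝ) * (α ^ j * a (n + 1 - k + j) * ((n + 1 - k).factorial : ℝ)) :=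
                mul_le_mul_of_nonneg_left hd hpos
            _ = α ^ j * ((n + 1 - k).factorial : ℝ) * (((n + 1 - k + j + 1 : ℕ) : ℝ) * a (n + 1 - k + j)) := by ring
            _ ≤ α ^ j * ((n + 1 - k).factorial : ℝ) * (α * a (n + 1 - k + j + 1)) := by
                apply mul_le_mul_of_nonneg_left _ (by positivity)
                have := IH (n + 1 - k + j) hm
                convert this using 3 <;> push_cast <;> try ring
            _ = α ^ (j+1) * a (n + 1 - k + (j+1)) * ((n + 1 - k).factorial : ℝ) := by
                have : n + 1 - k + (j + 1) = n + 1 - k + j + 1 := by omega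
                rw [this, pow_succ]
                ring
      have hD := D (k-1) (le_refl _)
      have hidx : n + 1 - k + (k - 1) = n := by omega
      rw [hidx] at hD
      -- main computation
      have hge := Hge n hcase
      have f3 : ((n + 1 : ℕ) : ℝ) * a n ≤ (a (n + 1) : ℝ) + ((n+1).choose k : ℝ) * a (n + 1 - k) := by
        exact_mod_cast hge
      have f1 : ((n+1).choose k : ℝ) * (k.factorial : ℝ) * ((n + 1 - k).factorial : ℝ)
          = ((n + 1 : ℕ) : ℝ) * (n.factorial : ℝ) := by
        have h := Nat.choose_mul_factorial_mul_factorial hcase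
        have h2 : (n+1).factorial = (n+1) * n.factorial := Nat.factorial_succ n
        rw [h2] at h
        exact_mod_cast h
      set K := (k.factorial : ℝ) with hKdef
      set F := (n.factorial : ℝ) with hFdef
      set G := ((n + 1 - k).factorial : ℝ) with hGdef
      set C := ((n+1).choose k : ℝ) with hCdef
      set an := (a n : ℝ)
      set ann := (a (n+1) : ℝ)
      set ank := (a (n + 1 - k) : ℝ)
      have hF : (0:ℝ) < F := by positivity
      have hG : (0:ℝ) < G := by positivity
      have hC : (0:ℝ) ≤ C := Nat.cast_nonneg _
      have hroot2 : K * α = K + α ^ k := by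
        field_simp at hroot
        nlinarith [hroot]
      -- from hD : ank * F ≤ α^(k-1) * an * G
      have e1 : α * C * K * (ank * F) ≤ α * C * K * (α ^ (k-1) * an * G) := by
        apply mul_le_mul_of_nonneg_left hD (by positivity)
      have hαk : α * α ^ (k-1) = α ^ k := by
        rw [← pow_succ']
        congr 1
        omega
      have e2 : α * C * K * (α ^ (k-1) * an * G) = α ^ k * an * (C * K * G) := by
        rw [← hαk]; ring
      rw [e2, f1] at e1
      -- e1 : α * C * K * (ank * F) ≤ α^k * an * ((n+1) * F)
      have e1' : (α * C * ank * K) * F ≤ (α ^ k * (((n + 1 : ℕ) : ℝ) * an)) * F := by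
        linarith [e1]
      have e3 : (α * C * ank) * K ≤ α ^ k * (((n + 1 : ℕ) : ℝ) * an) :=
        le_of_mul_le_mul_right e1' hF
      -- combine
      have f3' : K * α * (((n + 1 : ℕ) : ℝ) * an) ≤ K * α * ann + K * (α * C * ank) := by
        have := mul_le_mul_of_nonneg_left f3 (by positivity : (0:ℝ) ≤ K * α)
        linarith [this]
      have expand : K * α * (((n + 1 : ℕ) : ℝ) * an)
          = K * (((n + 1 : ℕ) : ℝ) * an) + α ^ k * (((n + 1 : ℕ) : ℝ) * an) := by
        rw [hroot2]; ring
      have goal' : K * (((n + 1 : ℕ) : ℝ) * an) ≤ K * (α * ann) := by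
        linarith [f3', e3, expand]
      exact (mul_le_mul_iff_right₀ hK).1 goal'

theorem final (hk : 2 ≤ k) (hα : 0 < α)
    (ha0 : a 0 = 1)
    (hroot : 1 - α + α ^ k / (k.factorial : ℝ) = 0)
    (hclaim : ∀ n : ℕ, ((n + 1 : ℕ) : ℝ) * a n ≤ α * a (n + 1)) :
    ∀ n : ℕ, (n.factorial : ℝ) / α ^ n ≤ (a n : ℝ) := by
  have hK : (0 : ℝ) < (k.factorial : ℝ) := by positivity
  have hα1 : 1 ≤ α := by
    have h0 : 0 ≤ α ^ k / (k.factorial : ℝ) := by positivity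
    linarith
  intro n
  induction n with
  | zero => simp [ha0]
  | succ n ih =>
    rw [div_le_iff₀ (by positivity)] at ih ⊢
    have h1 : ((n+1).factorial : ℝ) = ((n + 1 : ℕ) : ℝ) * (n.factorial : ℝ) := by
      rw [Nat.factorial_succ]; push_cast; ring
    have h2 := hclaim n
    calc ((n+1).factorial : ℝ) = ((n + 1 : ℕ) : ℝ) * (n.factorial : ℝ) := h1
      _ ≤ ((n + 1 : ℕ) : ℝ) * ((a n : ℝ) * α ^ n) := by
          apply mul_le_mul_of_nonneg_left ih (Nat.cast_nonneg _)
      _ = (((n + 1 : ℕ) : ℝ) * (a n : ℝ)) * α ^ n := by ring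
      _ ≤ (α * (a (n+1) : ℝ)) * α ^ n := by
          apply mul_le_mul_of_nonneg_right h2 (by positivity)
      _ = (a (n+1) : ℝ) * α ^ (n+1) := by rw [pow_succ]; ring

end Analysis

section Glue
variable (τ : List ℕ)

lemma A_zero (hk2 : 2 ≤ τ.length) : A τ 0 = {[]} := by
  ext σ
  simp only [A, Set.mem_setOf_eq, Set.mem_singleton_iff]
  constructor
  · rintro ⟨h, _, _⟩
    exact List.length_eq_zero_iff.1 h
  · rintro rfl
    refine ⟨rfl, ?_, ?_⟩
    · show List.Perm [] (List.range ([] : List ℕ).length)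
      simp
    · intro τ' hτ' hocc
      rw [Set.mem_singleton_iff] at hτ'
      subst hτ'
      obtain ⟨i, hi, -⟩ := hocc
      simp only [List.length_nil] at hi
      omega

lemma avoidCount_zero (hk2 : 2 ≤ τ.length) : avoidCount {τ} 0 = 1 := by
  rw [avoidCount_eq, A_zero τ hk2, Set.ncard_singleton]

lemma Bad_empty {n : ℕ} (hn : n < τ.length) : Bad τ n = ∅ := by
  ext σ
  simp only [Bad, Set.mem_setOf_eq, Set.mem_empty_iff_false, iff_false]
  rintro ⟨⟨hlen, -, -⟩, hocc, -⟩
  omega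

lemma Hlt (hk2 : 2 ≤ τ.length) {n : ℕ} (h : n + 1 < τ.length) :
    (n + 1) * avoidCount {τ} n ≤ avoidCount {τ} (n + 1) := by
  have h1 := card_S_lower τ n
  have h2 := card_S_le τ (n + 1)
  rw [Bad_empty τ h, Set.ncard_empty] at h2
  omega

lemma Hge (hk2 : 2 ≤ τ.length) {n : ℕ} (h : τ.length ≤ n + 1) :
    (n + 1) * avoidCount {τ} n ≤
      avoidCount {τ} (n + 1) + (n + 1).choose τ.length * avoidCount {τ} (n + 1 - τ.length) := by
  have h1 := card_S_lower τ n
  have h2 := card_S_le τ (n + 1)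
  have h3 := card_Bad_le (τ := τ) (n := n + 1) hk2 h
  omega

end Glue
end StdAux

/-- For a single pattern `τ` of length `k ≥ 2` and a root `α > 0` of `1 - t + t^k/k!`,
the number of permutations of length `n` avoiding `τ` is at least `α^{-n} n!`. -/
theorem statement2 (k : ℕ) (hk : 2 ≤ k) (τ : List ℕ)
    (hτperm : IsPermList τ) (hτlen : τ.length = k)
    (α : ℝ) (hα : 0 < α) (hroot : 1 - α + α ^ k / (k.factorial : ℝ) = 0) :
    ∀ n : ℕ, (n.factorial : ℝ) / α ^ n ≤ (avoidCount {τ} n : ℝ) := by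
  have hk2 : 2 ≤ τ.length := by rw [hτlen]; exact hk
  have hclaim := StdAux.main_claim (avoidCount {τ}) k α hk hα hroot
    (fun n hn => by
      have := StdAux.Hlt τ hk2 (n := n) (by omega : n + 1 < τ.length)
      exact_mod_cast this)
    (fun n hn => by
      have := StdAux.Hge τ hk2 (n := n) (by omega : τ.length ≤ n + 1)
      rw [hτlen] at this
      exact this)
  exact StdAux.final (avoidCount {τ}) k α hk hα
    (by rw [StdAux.avoidCount_zero τ hk2]) hroot hclaim
end

section
/- Let k ≥ 2 and let a_n be the number of permutations of length n avoiding the increasing pattern 1 2 … k as a consecutive pattern (i.e., having no k consecutive entries in increasing order). Then, as an identity of formal power series over ℚ, (Σ_{q≥0} t^{kq} / (kq)! − Σ_{q≥0} t^{kq+1} / (kq+1)!) · (Σ_{n≥0} a_n t^n / n!) = 1. -/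
namespace S16
open List

def cnt (l : List ℕ) (x : ℕ) : ℕ := (l.filter (· < x)).length


lemma cnt_eq_countP (l : List ℕ) (x : ℕ) : cnt l x = l.countP (fun z => z < x) := by
  simp [cnt, List.countP_eq_length_filter]

lemma std_eq_map (l : List ℕ) : std l = l.map (cnt l) := rfl

lemma length_std (l : List ℕ) : (std l).length = l.length := by simp [std]

lemma cnt_eq_card {l : List ℕ} (hl : l.Nodup) (x : ℕ) :
    cnt l x = (l.toFinset.filter (· < x)).card := by
  rw [cnt]
  rw [← List.toFinset_card_of_nodup (hl.filter _), List.toFinset_filter]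
  congr 1
  simp

lemma cnt_lt_cnt_of_lt {l : List ℕ} (hl : l.Nodup) {x y : ℕ} (hx : x ∈ l) (hxy : x < y) :
    cnt l x < cnt l y := by
  rw [cnt_eq_card hl, cnt_eq_card hl]
  apply Finset.card_lt_card
  constructor
  · intro z hz
    simp only [Finset.mem_filter, decide_eq_true_eq] at hz ⊢
    exact ⟨hz.1, lt_trans hz.2 hxy⟩
  · intro hsub
    have := hsub (by simp [List.mem_toFinset.2 hx, hxy] : x ∈ l.toFinset.filter (· < y))
    simp at this

lemma cnt_lt_cnt {l : List ℕ} (hl : l.Nodup) {x y : ℕ} (hx : x ∈ l) (hy : y ∈ l) :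
    cnt l x < cnt l y ↔ x < y := by
  constructor
  · intro h
    rcases lt_trichotomy x y with h' | h' | h'
    · exact h'
    · subst h'; omega
    · exact absurd (cnt_lt_cnt_of_lt hl hy h') (by omega)
  · exact fun h => cnt_lt_cnt_of_lt hl hx h


-- sorted characterization by getElem
lemma sorted_lt_iff_get {l : List ℕ} :
    l.Pairwise (· < ·) ↔ ∀ (j : ℕ) (h : j + 1 < l.length), l[j] < l[j+1] := by
  rw [← List.isChain_iff_pairwise, List.isChain_iff_getElem]

lemma cnt_sorted_get {s : List ℕ} (hs : s.Pairwise (· < ·)) :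
    ∀ (j : ℕ) (hj : j < s.length), cnt s s[j] = j := by
  induction s with
  | nil => intro j hj; simp at hj
  | cons a t ih =>
    have ha : ∀ x ∈ t, a < x := fun x hx => List.rel_of_pairwise_cons hs hx
    intro j hj
    cases j with
    | zero =>
      simp only [List.getElem_cons_zero]
      have : (a :: t).filter (· < a) = [] := by
        rw [List.filter_eq_nil_iff]
        intro x hx
        simp only [decide_eq_true_eq, not_lt]
        rcases List.mem_cons.1 hx with h | h
        · omega
        · exact le_of_lt (ha x h)
      simp [cnt, this]
    | succ j =>
      simp only [List.getElem_cons_succ]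
      have hj' : j < t.length := by simpa using hj
      have hlt : a < t[j] := ha _ (List.getElem_mem hj')
      have : cnt (a :: t) t[j] = cnt t t[j] + 1 := by
        simp [cnt, List.filter_cons, hlt]
      rw [this, ih (List.pairwise_cons.1 hs).2 j hj']

lemma cnt_perm {l l' : List ℕ} (h : l.Perm l') (x : ℕ) : cnt l x = cnt l' x := by
  simp only [cnt, ← List.countP_eq_length_filter]
  exact h.countP_eq _

lemma sort_toFinset_perm {l : List ℕ} (hl : l.Nodup) :
    l.toFinset.sort (· ≤ ·) ~ l :=
  (Finset.sort_perm_toList _ _).trans (List.toFinset_toList hl)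

lemma std_getElem (l : List ℕ) (j : ℕ) (hj : j < l.length) :
    (std l)[j]'(by simpa [std] using hj) = cnt l l[j] := by
  simp [std, cnt]

lemma std_perm {l : List ℕ} (hl : l.Nodup) : (std l).Perm (List.range l.length) := by
  set s := l.toFinset.sort (· ≤ ·) with hs
  have hps : s.Perm l := sort_toFinset_perm hl
  have hss : s.Pairwise (· < ·) := (Finset.sortedLT_sort _).pairwise
  have h1 : (std l).Perm (s.map (cnt l)) := (hps.map (cnt l)).symm
  have h2 : s.map (cnt l) = s.map (cnt s) := by
    apply List.map_congr_left
    intro x _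
    exact cnt_perm hps.symm x
  have h3 : s.map (cnt s) = List.range l.length := by
    apply List.ext_getElem
    · simp [hps.length_eq]
    · intro j hj hj'
      have hjs : j < s.length := by simpa using hj
      simp only [List.getElem_map, List.getElem_range]
      exact cnt_sorted_get hss j hjs
  rw [h2, h3] at h1
  exact h1

lemma countP_range_lt (x n : ℕ) (h : x ≤ n) : (List.range n).countP (fun z => z < x) = x := by
  induction n with
  | zero => simp; omega
  | succ n ih =>
    rw [List.range_succ, List.countP_append]
    by_cases hx : x ≤ n
    · rw [ih hx]
      simp [List.countP_cons]
      omega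
    · have hx' : x = n + 1 := by omega
      subst hx'
      have h1 : (List.range n).countP (fun z => decide (z < n+1)) = n := by
        rw [List.countP_eq_length.2]
        · exact List.length_range
        · intro a ha
          simp only [List.mem_range] at ha
          simp
          omega
      simp only [List.countP_cons]
      rw [h1]
      simp

lemma std_of_perm_range {l : List ℕ} (h : l.Perm (List.range l.length)) : std l = l := by
  apply List.ext_getElem
  · simp [std]
  · intro j hj hj'
    rw [std_getElem l j hj']
    have hmem : l[j] ∈ l := List.getElem_mem hj'
    have hlt : l[j] < l.length := by
      have := h.mem_iff.1 hmem
      simpa using this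
    rw [cnt, ← List.countP_eq_length_filter, h.countP_eq]
    exact countP_range_lt _ _ (le_of_lt hlt)

/-- sortedness of a list transfers along a map that's strictly monotone on members -/
lemma sorted_map_iff {l : List ℕ} {f : ℕ → ℕ}
    (hf : ∀ a ∈ l, ∀ b ∈ l, (a < b ↔ f a < f b)) :
    (l.map f).Pairwise (· < ·) ↔ l.Pairwise (· < ·) := by
  rw [List.pairwise_map]
  exact List.Pairwise.iff_of_mem (fun {a b} ha hb => (hf a ha b hb).symm)

def NoWin (k : ℕ) (l : List ℕ) : Prop :=
  ∀ i, i + k ≤ l.length → ¬ ((l.drop i).take k).Pairwise (· < ·)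

lemma window_map (f : ℕ → ℕ) (l : List ℕ) (i k : ℕ) :
    ((l.map f).drop i).take k = (((l.drop i).take k).map f) := by
  rw [List.map_take, List.map_drop]

lemma window_subset {l : List ℕ} {i k : ℕ} : ∀ x ∈ (l.drop i).take k, x ∈ l :=
  fun x hx => List.mem_of_mem_drop (List.mem_of_mem_take hx)

lemma noWin_map_iff {l : List ℕ} {f : ℕ → ℕ} {k : ℕ}
    (hf : ∀ a ∈ l, ∀ b ∈ l, (a < b ↔ f a < f b)) :
    NoWin k (l.map f) ↔ NoWin k l := by
  unfold NoWin
  rw [forall_congr']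
  intro i
  rw [List.length_map]
  constructor
  · intro h hi hs
    apply h hi
    rw [window_map]
    rw [sorted_map_iff (fun a ha b hb => hf a (window_subset a ha) b (window_subset b hb))]
    exact hs
  · intro h hi hs
    apply h hi
    rw [window_map] at hs
    rw [sorted_map_iff (fun a ha b hb => hf a (window_subset a ha) b (window_subset b hb))] at hs
    exact hs

lemma noWin_std_iff {l : List ℕ} (hl : l.Nodup) {k : ℕ} :
    NoWin k (std l) ↔ NoWin k l := by
  rw [std_eq_map]
  exact noWin_map_iff (fun a ha b hb => (cnt_lt_cnt hl ha hb).symm)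

lemma std_eq_range_iff {w : List ℕ} (hw : w.Nodup) :
    std w = List.range w.length ↔ w.Pairwise (· < ·) := by
  constructor
  · intro h
    rw [sorted_lt_iff_get]
    intro j hj
    rw [← cnt_lt_cnt hw (List.getElem_mem (by omega)) (List.getElem_mem hj)]
    have e1 : cnt w w[j] = j := by
      rw [← std_getElem w j (by omega), List.getElem_of_eq h, List.getElem_range]
    have e2 : cnt w w[j+1] = j + 1 := by
      rw [← std_getElem w (j+1) hj, List.getElem_of_eq h, List.getElem_range]
    omega
  · intro h
    apply List.ext_getElem
    · simp [std]
    · intro j hj hj'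
      have hjw : j < w.length := by simpa [std] using hj
      rw [std_getElem w j hjw]
      simp only [List.getElem_range]
      exact cnt_sorted_get h j hjw

lemma std_map_of_mono {l : List ℕ} {f : ℕ → ℕ}
    (hf : ∀ a ∈ l, ∀ b ∈ l, (a < b ↔ f a < f b)) :
    std (l.map f) = std l := by
  rw [std_eq_map, std_eq_map, List.map_map]
  apply List.map_congr_left
  intro x hx
  simp only [Function.comp]
  rw [cnt_eq_countP, cnt_eq_countP, List.countP_map]
  apply List.countP_congr
  intro a ha
  simp only [Function.comp, decide_eq_true_eq]
  exact (hf a ha x hx).symm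

lemma map_getD_range (l : List ℕ) : (List.range l.length).map (fun x => l.getD x 0) = l := by
  apply List.ext_getElem
  · simp
  · intro j hj hj'
    simp only [List.getElem_map, List.getElem_range]
    exact List.getD_eq_getElem _ _ hj' 

lemma getD_sort_cnt {l : List ℕ} (hl : l.Nodup) {x : ℕ} (hx : x ∈ l) :
    (l.toFinset.sort (· ≤ ·)).getD (cnt l x) 0 = x := by
  set s := l.toFinset.sort (· ≤ ·) with hs
  have hps : s.Perm l := sort_toFinset_perm hl
  have hss : s.Pairwise (· < ·) := (Finset.sortedLT_sort _).pairwise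
  have hxs : x ∈ s := hps.mem_iff.2 hx
  obtain ⟨j, hj, hxj⟩ := List.getElem_of_mem hxs
  rw [cnt_perm hps.symm x, ← hxj, cnt_sorted_get hss j hj]
  rw [List.getD_eq_getElem _ _ hj, hxj]

attribute [local instance] Classical.propDecidable

lemma occursAt_range_iff {σ : List ℕ} (hσ : σ.Nodup) {k i : ℕ} :
    OccursAt (List.range k) σ i ↔ i + k ≤ σ.length ∧ ((σ.drop i).take k).Pairwise (· < ·) := by
  unfold OccursAt
  rw [List.length_range]
  apply and_congr_right
  intro h
  have hlen : ((σ.drop i).take k).length = k := by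
    simp only [List.length_take, List.length_drop]
    omega
  have hsub : (σ.drop i).take k <+ σ := (List.take_sublist _ _).trans (List.drop_sublist _ _)
  have hnd : ((σ.drop i).take k).Nodup := hσ.sublist hsub
  rw [show List.range k = List.range ((σ.drop i).take k).length by rw [hlen]]
  exact std_eq_range_iff hnd

noncomputable def permsF (n : ℕ) : Finset (List ℕ) := ((List.range n).permutations).toFinset

lemma mem_permsF {n : ℕ} {σ : List ℕ} : σ ∈ permsF n ↔ σ.Perm (List.range n) := by
  simp [permsF, List.mem_permutations]

lemma perm_range_length {n : ℕ} {σ : List ℕ} (h : σ.Perm (List.range n)) : σ.length = n := by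
  simpa using h.length_eq

lemma perm_range_nodup {n : ℕ} {σ : List ℕ} (h : σ.Perm (List.range n)) : σ.Nodup :=
  h.nodup_iff.2 (List.nodup_range)

lemma perm_range_mem_lt {n : ℕ} {σ : List ℕ} (h : σ.Perm (List.range n)) {x : ℕ} (hx : x ∈ σ) :
    x < n := by
  have := h.mem_iff.1 hx
  simpa using this

lemma mem_permsF_iff {n : ℕ} {σ : List ℕ} :
    σ ∈ permsF n ↔ (σ.length = n ∧ IsPermList σ) := by
  rw [mem_permsF]
  constructor
  · intro h
    refine ⟨perm_range_length h, ?_⟩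
    unfold IsPermList
    rw [perm_range_length h]
    exact h
  · intro ⟨h1, h2⟩
    unfold IsPermList at h2
    rw [h1] at h2
    exact h2

def NoWinP (k : ℕ) (l : List ℕ) : Prop := NoWin k l

noncomputable def avoidF (k n : ℕ) : Finset (List ℕ) := (permsF n).filter (NoWin k)

lemma mem_avoidF {k n : ℕ} {σ : List ℕ} :
    σ ∈ avoidF k n ↔ σ ∈ permsF n ∧ NoWin k σ := Finset.mem_filter

lemma avoidsAll_iff {k : ℕ} {σ : List ℕ} (hσ : σ.Nodup) :
    AvoidsAll {List.range k} σ ↔ NoWin k σ := by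
  unfold AvoidsAll NoWin Occurs
  constructor
  · intro h i hi hs
    exact h (List.range k) rfl ⟨i, (occursAt_range_iff hσ).2 ⟨hi, hs⟩⟩
  · intro h τ hτ ⟨i, hocc⟩
    rw [Set.mem_singleton_iff] at hτ
    subst hτ
    rw [occursAt_range_iff hσ] at hocc
    exact h i hocc.1 hocc.2

lemma avoidCount_eq (k n : ℕ) :
    avoidCount {List.range k} n = (avoidF k n).card := by
  unfold avoidCount
  have hequiv : {σ : List ℕ // σ.length = n ∧ IsPermList σ ∧ AvoidsAll {List.range k} σ} ≃
      {σ : List ℕ // σ ∈ avoidF k n} := by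
    apply Equiv.subtypeEquivRight
    intro σ
    rw [mem_avoidF, mem_permsF_iff]
    constructor
    · intro ⟨h1, h2, h3⟩
      have hnd : σ.Nodup := perm_range_nodup (n := σ.length) h2
      exact ⟨⟨h1, h2⟩, (avoidsAll_iff hnd).1 h3⟩
    · intro ⟨⟨h1, h2⟩, h3⟩
      have hnd : σ.Nodup := perm_range_nodup (n := σ.length) h2
      exact ⟨h1, h2, (avoidsAll_iff hnd).2 h3⟩
  rw [Nat.card_congr hequiv, Nat.card_eq_fintype_card, Fintype.card_coe]

lemma avoidF_zero (k : ℕ) (hk : 1 ≤ k) : avoidF k 0 = {[]} := by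
  ext σ
  rw [mem_avoidF, mem_permsF, Finset.mem_singleton]
  constructor
  · intro ⟨h1, _⟩
    simpa using h1.length_eq
  · intro h
    subst h
    refine ⟨by simp, ?_⟩
    intro i hi
    simp at hi
    omega

lemma toFinset_range' (n : ℕ) : (List.range n).toFinset = Finset.range n := by ext x; simp

lemma drop_toFinset_eq {n m : ℕ} {σ : List ℕ} (h : σ.Perm (List.range n)) :
    (σ.drop m).toFinset = Finset.range n \ (σ.take m).toFinset := by
  have hnd : σ.Nodup := perm_range_nodup h
  have hsplit := List.take_append_drop m σ
  have hndapp : (σ.take m ++ σ.drop m).Nodup := by rw [hsplit]; exact hnd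
  have hdisj : Disjoint (σ.take m).toFinset (σ.drop m).toFinset :=
    List.disjoint_toFinset_iff_disjoint.2 (List.disjoint_of_nodup_append hndapp)
  have hunion : (σ.take m).toFinset ∪ (σ.drop m).toFinset = Finset.range n := by
    rw [← List.toFinset_append, hsplit, List.toFinset_eq_of_perm _ _ h, toFinset_range']
  rw [← hunion, Finset.union_sdiff_cancel_left hdisj]

lemma sorted_toFinset_sort {l : List ℕ} (h : l.Pairwise (· < ·)) :
    l.toFinset.sort (· ≤ ·) = l :=
  (List.toFinset_sort _ h.sortedLT.nodup).2 (h.imp le_of_lt)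

lemma getD_sorted_mono_iff {c : List ℕ} (hc : c.Pairwise (· < ·)) {a b : ℕ}
    (ha : a < c.length) (hb : b < c.length) :
    a < b ↔ c.getD a 0 < c.getD b 0 := by
  rw [List.getD_eq_getElem _ _ ha, List.getD_eq_getElem _ _ hb]
  have hms : StrictMono c.get := hc.sortedLT.strictMono_get
  constructor
  · intro h
    have := hms.lt_iff_lt.mpr (show (⟨a, ha⟩ : Fin c.length) < ⟨b, hb⟩ from Fin.mk_lt_mk.mpr h)
    simpa using this
  · intro h
    have := hms.lt_iff_lt.mp (show c.get ⟨a, ha⟩ < c.get ⟨b, hb⟩ by simpa using h)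
    exact Fin.mk_lt_mk.mp this

lemma sortedcomp_perm_add {n : ℕ} {S : Finset ℕ} (hS : S ⊆ Finset.range n) :
    (S.sort (· ≤ ·) ++ (Finset.range n \ S).sort (· ≤ ·)).Perm (List.range n) := by
  rw [← Multiset.coe_eq_coe]
  have h1 : ((S.sort (· ≤ ·) ++ (Finset.range n \ S).sort (· ≤ ·) : List ℕ) : Multiset ℕ)
      = S.val + (Finset.range n \ S).val := by
    rw [← Multiset.coe_add, Finset.sort_eq, Finset.sort_eq]
  rw [h1, Finset.sdiff_val]
  have hle : S.val ≤ (Finset.range n).val := Finset.val_le_iff.2 hS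
  rw [add_comm, tsub_add_cancel_of_le hle, Finset.range_val, ← Multiset.coe_range]

lemma cardA (k n m : ℕ) (hm : m ≤ n) :
    ((permsF n).filter (fun σ => (σ.take m).Pairwise (· < ·) ∧ NoWin k (σ.drop m))).card
      = n.choose m * (avoidF k (n - m)).card := by
  have hRHS : n.choose m * (avoidF k (n - m)).card
      = ((Finset.powersetCard m (Finset.range n)) ×ˢ avoidF k (n - m)).card := by
    rw [Finset.card_product, Finset.card_powersetCard, Finset.card_range]
  rw [hRHS]
  apply Finset.card_bij'
    (i := fun σ _ => ((σ.take m).toFinset, std (σ.drop m)))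
    (j := fun p _ => (p.1.sort (· ≤ ·))
      ++ p.2.map (fun x => (((Finset.range n) \ p.1).sort (· ≤ ·)).getD x 0))
  -- hi : forward maps into target
  · intro σ hσ
    rw [Finset.mem_filter, mem_permsF] at hσ
    obtain ⟨hσp, hsort, hnw⟩ := hσ
    have hnd : σ.Nodup := perm_range_nodup hσp
    have hlen : σ.length = n := perm_range_length hσp
    have hndt : (σ.take m).Nodup := hnd.sublist (List.take_sublist _ _)
    have hndd : (σ.drop m).Nodup := hnd.sublist (List.drop_sublist _ _)
    rw [Finset.mem_product]
    constructor
    · rw [Finset.mem_powersetCard]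
      constructor
      · intro x hx
        rw [List.mem_toFinset] at hx
        exact Finset.mem_range.2 (perm_range_mem_lt hσp (List.mem_of_mem_take hx))
      · rw [List.toFinset_card_of_nodup hndt, List.length_take]
        omega
    · rw [mem_avoidF, mem_permsF]
      have hdl : (σ.drop m).length = n - m := by rw [List.length_drop, hlen]
      constructor
      · have := std_perm hndd
        rwa [hdl] at this
      · exact (noWin_std_iff hndd).2 hnw
  -- hj : backward maps into source
  · intro p hp
    rw [Finset.mem_product, Finset.mem_powersetCard, mem_avoidF, mem_permsF] at hp
    obtain ⟨⟨hS, hScard⟩, hπ, hπnw⟩ := hp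
    set S := p.1
    set π := p.2
    set c : List ℕ := (Finset.range n \ S).sort (· ≤ ·) with hc
    set g : ℕ → ℕ := fun x => c.getD x 0 with hg
    have hclen : c.length = n - m := by
      rw [hc, Finset.length_sort, Finset.card_sdiff_of_subset hS, Finset.card_range, hScard]
    have hcs : c.Pairwise (· < ·) := (Finset.sortedLT_sort _).pairwise
    have hmono : ∀ a ∈ π, ∀ b ∈ π, (a < b ↔ g a < g b) := by
      intro a ha b hb
      exact getD_sorted_mono_iff hcs (by rw [hclen]; exact perm_range_mem_lt hπ ha)
        (by rw [hclen]; exact perm_range_mem_lt hπ hb)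
    have hmapc : (List.range (n - m)).map g = c := by
      rw [← hclen]; exact map_getD_range c
    have hmapperm : (π.map g).Perm c := (hπ.map g).trans (List.Perm.of_eq hmapc)
    rw [Finset.mem_filter, mem_permsF]
    have hslen : (S.sort (· ≤ ·)).length = m := by rw [Finset.length_sort, hScard]
    refine ⟨?_, ?_, ?_⟩
    · exact ((hmapperm.append_left (S.sort (· ≤ ·))).trans (sortedcomp_perm_add hS))
    · rw [List.take_left' hslen]
      exact (Finset.sortedLT_sort _).pairwise
    · rw [List.drop_left' hslen]
      exact (noWin_map_iff hmono).2 hπnw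
  -- left inverse
  · intro σ hσ
    rw [Finset.mem_filter, mem_permsF] at hσ
    obtain ⟨hσp, hsort, hnw⟩ := hσ
    have hnd : σ.Nodup := perm_range_nodup hσp
    have hndd : (σ.drop m).Nodup := hnd.sublist (List.drop_sublist _ _)
    have hcomp : Finset.range n \ (σ.take m).toFinset = (σ.drop m).toFinset :=
      (drop_toFinset_eq hσp).symm
    dsimp only
    rw [hcomp, sorted_toFinset_sort hsort]
    have hmap : (std (σ.drop m)).map (fun x => (((σ.drop m).toFinset).sort (· ≤ ·)).getD x 0)
        = σ.drop m := by
      rw [std_eq_map, List.map_map]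
      conv_rhs => rw [← List.map_id (σ.drop m)]
      apply List.map_congr_left
      intro x hx
      simp only [Function.comp, id]
      exact getD_sort_cnt hndd hx
    rw [hmap, List.take_append_drop]
  -- right inverse
  · intro p hp
    rw [Finset.mem_product, Finset.mem_powersetCard, mem_avoidF, mem_permsF] at hp
    obtain ⟨⟨hS, hScard⟩, hπ, hπnw⟩ := hp
    set S := p.1
    set π := p.2
    set c : List ℕ := (Finset.range n \ S).sort (· ≤ ·) with hc
    set g : ℕ → ℕ := fun x => c.getD x 0 with hg
    have hclen : c.length = n - m := by
      rw [hc, Finset.length_sort, Finset.card_sdiff_of_subset hS, Finset.card_range, hScard]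
    have hcs : c.Pairwise (· < ·) := (Finset.sortedLT_sort _).pairwise
    have hmono : ∀ a ∈ π, ∀ b ∈ π, (a < b ↔ g a < g b) := by
      intro a ha b hb
      exact getD_sorted_mono_iff hcs (by rw [hclen]; exact perm_range_mem_lt hπ ha)
        (by rw [hclen]; exact perm_range_mem_lt hπ hb)
    have hslen : (S.sort (· ≤ ·)).length = m := by rw [Finset.length_sort, hScard]
    rw [List.take_left' hslen, List.drop_left' hslen]
    have h2 : std (π.map g) = π := by
      rw [std_map_of_mono hmono]
      apply std_of_perm_range
      rw [perm_range_length hπ]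
      exact hπ
    rw [Finset.sort_toFinset, h2]

lemma window_getElem {σ : List ℕ} {i k x : ℕ} (h : i + k ≤ σ.length) (hx : x < k) :
    ((σ.drop i).take k)[x]'(by rw [List.length_take, List.length_drop]; omega)
      = σ.getD (i + x) 0 := by
  rw [List.getElem_take, List.getElem_drop]
  exact (List.getD_eq_getElem _ _ (by omega)).symm

lemma sorted_window_iff {σ : List ℕ} {i k : ℕ} (h : i + k ≤ σ.length) :
    ((σ.drop i).take k).Pairwise (· < ·) ↔
      ∀ j, i ≤ j → j + 1 < i + k → σ.getD j 0 < σ.getD (j+1) 0 := by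
  have hlen : ((σ.drop i).take k).length = k := by
    simp only [List.length_take, List.length_drop]
    omega
  rw [sorted_lt_iff_get]
  constructor
  · intro hh j hij hjk
    have h3 := hh (j - i) (by rw [hlen]; omega)
    rw [window_getElem h (by omega : j - i < k),
        window_getElem h (by omega : j - i + 1 < k)] at h3
    rw [show i + (j - i) = j by omega, show i + (j - i + 1) = j + 1 by omega] at h3
    exact h3
  · intro hh x hx
    rw [hlen] at hx
    rw [window_getElem h (by omega : x < k), window_getElem h (by omega : x + 1 < k)]
    have := hh (i + x) (by omega) (by omega)
    rwa [show i + x + 1 = i + (x + 1) by omega] at this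

lemma sorted_take_iff {σ : List ℕ} {m : ℕ} (hm : m ≤ σ.length) :
    (σ.take m).Pairwise (· < ·) ↔ ∀ j, j + 1 < m → σ.getD j 0 < σ.getD (j+1) 0 := by
  have h := sorted_window_iff (σ := σ) (i := 0) (k := m) (by omega)
  rw [List.drop_zero] at h
  rw [h]
  constructor
  · intro hh j hj
    exact hh j (by omega) (by omega)
  · intro hh j _ hj
    exact hh j (by omega)

lemma noWin_drop {k : ℕ} (hk : 1 ≤ k) {l : List ℕ} (h : NoWin k l) (j : ℕ) : NoWin k (l.drop j) := by
  intro i hi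
  rw [List.drop_drop]
  apply h
  rw [List.length_drop] at hi
  omega

lemma card_mod_filter_Ico (M k c : ℕ) (hc : c < k) :
    ((Finset.Ico M (M + k)).filter (fun m => m % k = c)).card = 1 := by
  have hk : 0 < k := by omega
  have hdm : k * (M / k) + M % k = M := Nat.div_add_mod M k
  have hmk : M % k < k := Nat.mod_lt _ hk
  set e := c + k * (M / k) + (if M % k ≤ c then 0 else k) with he
  have hemod : e % k = c := by
    rw [he]
    split
    · rw [Nat.add_zero, Nat.add_mul_mod_self_left, Nat.mod_eq_of_lt hc]
    · rw [show c + k * (M / k) + k = c + k * (M / k + 1) by ring, Nat.add_mul_mod_self_left,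
        Nat.mod_eq_of_lt hc]
  have hmem : e ∈ Finset.Ico M (M + k) := by
    rw [Finset.mem_Ico, he]
    split <;> omega
  rw [Finset.card_eq_one]
  refine ⟨e, Finset.eq_singleton_iff_unique_mem.2 ⟨Finset.mem_filter.2 ⟨hmem, hemod⟩, ?_⟩⟩
  intro x hx
  rw [Finset.mem_filter, Finset.mem_Ico] at hx
  obtain ⟨⟨hx1, hx2⟩, hx3⟩ := hx
  rw [Finset.mem_Ico] at hmem
  rcases le_total x e with hle | hle
  · have hdvd : k ∣ e - x := (Nat.modEq_iff_dvd' hle).1 (by rw [Nat.ModEq, hx3, hemod])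
    have h0 := Nat.eq_zero_of_dvd_of_lt hdvd
    by_cases h1 : e - x = 0
    · omega
    · exact absurd (h0 (by omega)) h1
  · have hdvd : k ∣ x - e := (Nat.modEq_iff_dvd' hle).1 (by rw [Nat.ModEq, hx3, hemod])
    have h0 := Nat.eq_zero_of_dvd_of_lt hdvd
    by_cases h1 : x - e = 0
    · omega
    · exact absurd (h0 (by omega)) h1

lemma cardB {k n : ℕ} (hk : 2 ≤ k) (hn : 1 ≤ n) {σ : List ℕ} (hσ : σ.Perm (List.range n)) :
    ((Finset.range (n+1)).filter
        (fun m => m % k = 0 ∧ (σ.take m).Pairwise (· < ·) ∧ NoWin k (σ.drop m))).card =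
    ((Finset.range (n+1)).filter
        (fun m => m % k = 1 ∧ (σ.take m).Pairwise (· < ·) ∧ NoWin k (σ.drop m))).card := by
  have hlen : σ.length = n := perm_range_length hσ
  set P1 : ℕ → Prop := fun m => (σ.take m).Pairwise (· < ·) with hP1
  have hex : ∃ m, NoWin k (σ.drop m) := by
    refine ⟨n, fun i hi => ?_⟩
    rw [List.length_drop, hlen] at hi
    exact absurd hi (by omega)
  set M := Nat.find hex with hM
  set r := Nat.findGreatest P1 n with hr
  have hrn : r ≤ n := Nat.findGreatest_le n
  have hMspec : NoWin k (σ.drop M) := Nat.find_spec hex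
  have hMn : M ≤ n := Nat.find_min' hex (by
    refine fun i hi => ?_
    rw [List.length_drop, hlen] at hi
    exact absurd hi (by omega))
  have hP1r : P1 r := Nat.findGreatest_spec (m := 0) (by omega) (by simp [hP1])
  have hQ : ∀ m, m ≤ n →
      (((σ.take m).Pairwise (· < ·) ∧ NoWin k (σ.drop m)) ↔ (M ≤ m ∧ m ≤ r)) := by
    intro m hmn
    constructor
    · intro ⟨h1, h2⟩
      exact ⟨Nat.find_min' hex h2, Nat.le_findGreatest hmn h1⟩
    · intro ⟨h1, h2⟩
      constructor
      · have hsub : σ.take m <+ σ.take r := by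
          rw [show σ.take m = (σ.take r).take m by rw [List.take_take]; congr 1; omega]
          exact List.take_sublist _ _
        exact List.Pairwise.sublist hsub hP1r
      · rw [show m = M + (m - M) by omega, ← List.drop_drop]
        exact noWin_drop (by omega) hMspec _
  have hfilter : ∀ c : ℕ,
      (Finset.range (n+1)).filter
          (fun m => m % k = c ∧ (σ.take m).Pairwise (· < ·) ∧ NoWin k (σ.drop m))
        = (Finset.Icc M r).filter (fun m => m % k = c) := by
    intro c
    ext x
    rw [Finset.mem_filter, Finset.mem_filter, Finset.mem_range, Finset.mem_Icc]
    constructor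
    · intro ⟨h1, h2, h3⟩
      exact ⟨(hQ x (by omega)).1 h3, h2⟩
    · intro ⟨h1, h2⟩
      exact ⟨by omega, h2, (hQ x (by omega)).2 h1⟩
  rw [hfilter 0, hfilter 1]
  by_cases hMr : r < M
  · rw [Finset.Icc_eq_empty (by omega)]
    simp
  push_neg at hMr
  by_cases hM0 : M = 0
  · have hσnw : NoWin k σ := by
      have := hMspec
      rwa [hM0, List.drop_zero] at this
    have hrk : r < k := by
      by_contra hcon
      push_neg at hcon
      apply hσnw 0 (by omega)
      rw [List.drop_zero]
      have hsub : σ.take k <+ σ.take r := by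
        rw [show σ.take k = (σ.take r).take k by rw [List.take_take]; congr 1; omega]
        exact List.take_sublist _ _
      exact List.Pairwise.sublist hsub hP1r
    have hr1 : 1 ≤ r := by
      apply Nat.le_findGreatest hn
      rw [hP1]
      rcases σ with _ | ⟨a, t⟩
      · simp
      · simp [List.take_cons, List.pairwise_singleton]
    have hone : ∀ c : ℕ, c ≤ r →
        (Finset.Icc M r).filter (fun m => m % k = c) = {c} := by
      intro c hcr
      ext x
      rw [Finset.mem_filter, Finset.mem_Icc, Finset.mem_singleton]
      constructor
      · intro ⟨⟨_, hx2⟩, hx3⟩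
        rwa [Nat.mod_eq_of_lt (by omega)] at hx3
      · intro h
        subst h
        exact ⟨⟨by omega, hcr⟩, Nat.mod_eq_of_lt (by omega)⟩
    rw [hone 0 (by omega), hone 1 hr1]
    simp
  -- main case : 1 ≤ M ≤ r
  · have hM1 : 1 ≤ M := by omega
    have hnotM : ¬ NoWin k (σ.drop (M-1)) := Nat.find_min hex (by omega)
    unfold NoWin at hnotM
    push_neg at hnotM
    obtain ⟨i, hib, his⟩ := hnotM
    rw [List.length_drop, hlen] at hib
    have hi0 : i = 0 := by
      by_contra hi
      apply hMspec (i-1) (by rw [List.length_drop, hlen]; omega)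
      rw [List.drop_drop, show M + (i-1) = (M-1) + i by omega, ← List.drop_drop]
      exact his
    subst hi0
    rw [List.drop_drop, Nat.add_zero] at his
    have hwb : (M - 1) + k ≤ n := by omega
    have hwAsc := (sorted_window_iff (σ := σ) (i := M-1) (k := k) (by omega)).1 his
    have hrAsc := (sorted_take_iff (σ := σ) (m := r) (by omega)).1 hP1r
    have hrge : M + k - 1 ≤ r := by
      apply Nat.le_findGreatest (by omega)
      simp only [hP1]
      rw [sorted_take_iff (by omega : M + k - 1 ≤ σ.length)]
      intro j hj
      by_cases hjr : j + 1 < r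
      · exact hrAsc j hjr
      · exact hwAsc j (by omega) (by omega)
    have hrle : r ≤ M + k - 1 := by
      by_contra hcon
      push_neg at hcon
      apply hMspec 0 (by rw [List.length_drop, hlen]; omega)
      rw [List.drop_zero]
      rw [sorted_window_iff (σ := σ) (i := M) (k := k) (by omega)]
      intro j hj1 hj2
      exact hrAsc j (by omega)
    have hIcc : Finset.Icc M r = Finset.Ico M (M + k) := by
      ext x
      rw [Finset.mem_Icc, Finset.mem_Ico]
      omega
    rw [hIcc, card_mod_filter_Ico M k 0 (by omega), card_mod_filter_Ico M k 1 (by omega)]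

lemma natIdentity {k n : ℕ} (hk : 2 ≤ k) (hn : 1 ≤ n) :
    ∑ m ∈ (Finset.range (n+1)).filter (fun m => m % k = 0),
        n.choose m * (avoidF k (n - m)).card
      = ∑ m ∈ (Finset.range (n+1)).filter (fun m => m % k = 1),
        n.choose m * (avoidF k (n - m)).card := by
  have key : ∀ c : ℕ,
      ∑ m ∈ (Finset.range (n+1)).filter (fun m => m % k = c),
          n.choose m * (avoidF k (n - m)).card
        = ∑ σ ∈ permsF n,
          ((Finset.range (n+1)).filter
            (fun m => m % k = c ∧ (σ.take m).Pairwise (· < ·) ∧ NoWin k (σ.drop m))).card := by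
    intro c
    have h2 : ∀ m ∈ Finset.range (n+1),
        (if m % k = c then n.choose m * (avoidF k (n - m)).card else 0)
          = ∑ σ ∈ permsF n,
              if (m % k = c ∧ (σ.take m).Pairwise (· < ·) ∧ NoWin k (σ.drop m)) then 1 else 0 := by
      intro m hm
      rw [Finset.mem_range] at hm
      by_cases h1 : m % k = c
      · rw [if_pos h1, ← cardA k n m (by omega), Finset.card_filter]
        apply Finset.sum_congr rfl
        intro σ _
        by_cases h3 : (σ.take m).Pairwise (· < ·) ∧ NoWin k (σ.drop m) <;> simp [h1, h3]
      · rw [if_neg h1]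
        symm
        apply Finset.sum_eq_zero
        intro σ _
        simp [h1]
    rw [Finset.sum_filter, Finset.sum_congr rfl h2, Finset.sum_comm]
    apply Finset.sum_congr rfl
    intro σ _
    rw [Finset.card_filter]
  rw [key 0, key 1]
  apply Finset.sum_congr rfl
  intro σ hσ
  exact cardB hk hn (mem_permsF.1 hσ)

lemma coefAlg {n m : ℕ} (hm : m ≤ n) (N : ℚ) :
    (1/(m.factorial:ℚ)) * (N / (n-m).factorial) = ((n.choose m : ℚ) * N) / n.factorial := by
  have h := Nat.choose_mul_factorial_mul_factorial hm
  have h' : ((n.choose m : ℚ)) * m.factorial * (n-m).factorial = n.factorial := by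
    exact_mod_cast congrArg (fun x : ℕ => (x : ℚ)) h
  have hm0 : (m.factorial : ℚ) ≠ 0 := Nat.cast_ne_zero.2 (Nat.factorial_ne_zero m)
  have hnm0 : ((n-m).factorial : ℚ) ≠ 0 := Nat.cast_ne_zero.2 (Nat.factorial_ne_zero _)
  have hn0 : (n.factorial : ℚ) ≠ 0 := Nat.cast_ne_zero.2 (Nat.factorial_ne_zero n)
  field_simp
  linear_combination (-1 : ℚ) * N * h'

theorem statement16' (k : ℕ) (hk : 2 ≤ k) :
    (PowerSeries.mk fun n : ℕ =>
          if n % k = 0 then (1 : ℚ) / (n.factorial : ℚ)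
          else if n % k = 1 then -(1 : ℚ) / (n.factorial : ℚ)
          else 0) *
        (PowerSeries.mk fun n : ℕ =>
          (avoidCount {List.range k} n : ℚ) / (n.factorial : ℚ)) = 1 := by
  apply PowerSeries.ext
  intro n
  rw [PowerSeries.coeff_mul, Finset.Nat.sum_antidiagonal_eq_sum_range_succ_mk]
  simp only [PowerSeries.coeff_mk]
  rcases Nat.eq_zero_or_pos n with hn | hn
  · subst hn
    rw [Finset.sum_range_one]
    rw [avoidCount_eq, avoidF_zero k (by omega)]
    simp [Nat.zero_mod]
  · have hn' : n ≠ 0 := by omega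
    rw [PowerSeries.coeff_one, if_neg hn']
    have hterm : ∀ m ∈ Finset.range (n+1),
        (if m % k = 0 then (1 : ℚ) / (m.factorial : ℚ)
          else if m % k = 1 then -(1 : ℚ) / (m.factorial : ℚ) else 0)
            * ((avoidCount {List.range k} (n-m) : ℚ) / ((n-m).factorial : ℚ))
          = ((if m % k = 0 then ((n.choose m * (avoidF k (n-m)).card : ℕ) : ℚ) else 0)
             - (if m % k = 1 then ((n.choose m * (avoidF k (n-m)).card : ℕ) : ℚ) else 0))
            / (n.factorial : ℚ) := by
      intro m hm
      rw [Finset.mem_range] at hm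
      have hmn : m ≤ n := by omega
      rw [avoidCount_eq]
      by_cases h0 : m % k = 0
      · rw [if_pos h0, if_pos h0, if_neg (by omega : ¬ m % k = 1)]
        rw [coefAlg hmn]
        push_cast
        ring
      · rw [if_neg h0, if_neg h0]
        by_cases h1 : m % k = 1
        · rw [if_pos h1, if_pos h1]
          have : (-(1:ℚ) / (m.factorial : ℚ)) * (((avoidF k (n-m)).card : ℚ) / ((n-m).factorial : ℚ))
              = -((1/(m.factorial:ℚ)) * (((avoidF k (n-m)).card : ℚ) / ((n-m).factorial : ℚ))) := by
            ring
          rw [this, coefAlg hmn]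
          push_cast
          ring
        · rw [if_neg h1, if_neg h1]
          simp
    rw [Finset.sum_congr rfl hterm, ← Finset.sum_div, Finset.sum_sub_distrib,
      ← Finset.sum_filter, ← Finset.sum_filter, ← Nat.cast_sum, ← Nat.cast_sum,
      natIdentity hk hn]
    simp


end S16

/-- For the increasing pattern `1 2 … k` (0-indexed: `List.range k`), the inverse of the
exponential generating function of avoiders is
`Σ_{q≥0} t^{kq}/(kq)! − Σ_{q≥0} t^{kq+1}/(kq+1)!`, as formal power series over `ℚ`. -/
theorem statement16 (k : ℕ) (hk : 2 ≤ k) :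
    (PowerSeries.mk fun n : ℕ =>
          if n % k = 0 then (1 : ℚ) / (n.factorial : ℚ)
          else if n % k = 1 then -(1 : ℚ) / (n.factorial : ℚ)
          else 0) *
        (PowerSeries.mk fun n : ℕ =>
          (avoidCount {List.range k} n : ℚ) / (n.factorial : ℚ)) = 1 :=
  S16.statement16' k hk
end
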